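/- arXiv:0912.3891 — 3 statements merged into one kernel-verified Lean document; each statement's English description precedes it below -/
import Mathlib

section
/- Suppose min_k π_k ≥ λ > 0 and there are constants C₃ > 0 and β > 0 such that N^{-1} Σ_{k∈U} (Y_k(t) − Y_k(s))² ≤ C₃|t−s|^{2β} for all s,t ∈ [0,T]. Then there exists a constant C₆ depending only on C₃ such that, for every possible sample s and every t ∈ [0,T], |μ̂_d(t) − μ̂_N(t)| ≤ (C₆/λ) · max_{1≤i≤d−1} |t_{i+1} − t_i|^β. -/
open Finset MeasureTheory ProbabilityTheory Filter Topology

noncomputable section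

/-- Expectation of `f` under a sampling design `p` on the population `{0, …, N-1}`. -/
def dExp (N : ℕ) (p : Finset ℕ → ℝ) (f : Finset ℕ → ℝ) : ℝ :=
  ∑ s ∈ (Finset.range N).powerset, p s * f s

/-- Variance of `f` under the sampling design `p`. -/
def dVar (N : ℕ) (p : Finset ℕ → ℝ) (f : Finset ℕ → ℝ) : ℝ :=
  dExp N p (fun s => f s ^ 2) - dExp N p f ^ 2

/-- `p` is a fixed-size-`n` sampling design on the population `{0, …, N-1}`. -/
structure IsDesign (N n : ℕ) (p : Finset ℕ → ℝ) : Prop where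
  nonneg : ∀ s, 0 ≤ p s
  sum_one : ∑ s ∈ (Finset.range N).powerset, p s = 1
  supp : ∀ s, p s ≠ 0 → s ⊆ Finset.range N ∧ s.card = n

/-- First-order inclusion probability `π_k`. -/
def pi1 (N : ℕ) (p : Finset ℕ → ℝ) (k : ℕ) : ℝ :=
  dExp N p fun s => if k ∈ s then 1 else 0

/-- Second-order inclusion probability `π_{kl}` (it equals `π_k` on the diagonal). -/
def pi2 (N : ℕ) (p : Finset ℕ → ℝ) (k l : ℕ) : ℝ :=
  dExp N p fun s => if k ∈ s ∧ l ∈ s then 1 else 0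

/-- `Δ_{kl} = π_{kl} - π_k π_l`; on the diagonal it equals `π_k (1 - π_k)`. -/
def Delta (N : ℕ) (p : Finset ℕ → ℝ) (k l : ℕ) : ℝ :=
  pi2 N p k l - pi1 N p k * pi1 N p l

/-- Sample membership indicator `I_k`. -/
def ind (k : ℕ) (s : Finset ℕ) : ℝ := if k ∈ s then 1 else 0

/-- Population mean trajectory `μ_N`. -/
def popMean (N : ℕ) (Y : ℕ → ℝ → ℝ) (t : ℝ) : ℝ :=
  (N : ℝ)⁻¹ * ∑ k ∈ Finset.range N, Y k t

/-- Horvitz–Thompson estimator of the mean curve computed from the sample `s`. -/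
def htMean (N : ℕ) (p : Finset ℕ → ℝ) (Y : ℕ → ℝ → ℝ) (s : Finset ℕ) (t : ℝ) : ℝ :=
  (N : ℝ)⁻¹ * ∑ k ∈ s, Y k t / pi1 N p k

/-- Covariance function `γ_N(u,v)` of the Horvitz–Thompson estimator under the design. -/
def htCov (N : ℕ) (p : Finset ℕ → ℝ) (Y : ℕ → ℝ → ℝ) (u v : ℝ) : ℝ :=
  dExp N p (fun s => htMean N p Y s u * htMean N p Y s v) -
    dExp N p (fun s => htMean N p Y s u) * dExp N p (fun s => htMean N p Y s v)

/-- Horvitz–Thompson covariance estimator `γ̂(u,v)`. -/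
def htCovEst (N : ℕ) (p : Finset ℕ → ℝ) (Y : ℕ → ℝ → ℝ) (s : Finset ℕ) (u v : ℝ) : ℝ :=
  ((N : ℝ) ^ 2)⁻¹ * ∑ k ∈ s, ∑ l ∈ s,
    Y k u / pi1 N p k * (Y l v / pi1 N p l) * (Delta N p k l / pi2 N p k l)

/-- Mesh (largest gap) of a discretization grid `pts` with `d` subintervals. -/
def meshR (d : ℕ) (hd : 0 < d) (pts : Fin (d + 1) → ℝ) : ℝ :=
  Finset.univ.sup' (⟨⟨0, hd⟩, Finset.mem_univ _⟩ : (Finset.univ : Finset (Fin d)).Nonempty)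
    fun i : Fin d => |pts i.succ - pts i.castSucc|




lemma csAbs (N : ℕ) (f : ℕ → ℝ) (B : ℝ) (hB : 0 ≤ B)
    (h : (N:ℝ)⁻¹ * ∑ k ∈ range N, f k ^ 2 ≤ B ^ 2) :
    (N:ℝ)⁻¹ * ∑ k ∈ range N, |f k| ≤ B := by
  rcases Nat.eq_zero_or_pos N with hN | hN
  · simp [hN, hB]
  have hNpos : (0:ℝ) < N := by exact_mod_cast hN
  have hcs := Finset.sum_mul_sq_le_sq_mul_sq (range N) (fun k => |f k|) (fun _ => 1)
  simp only [mul_one, one_pow, sq_abs, Finset.sum_const, Finset.card_range,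
    nsmul_eq_mul, smul_eq_mul] at hcs
  have hL : 0 ≤ (N:ℝ)⁻¹ * ∑ k ∈ range N, |f k| := by positivity
  have hsq : ((N:ℝ)⁻¹ * ∑ k ∈ range N, |f k|) ^ 2 ≤ B ^ 2 := by
    calc ((N:ℝ)⁻¹ * ∑ k ∈ range N, |f k|) ^ 2
        = (N:ℝ)⁻¹ ^ 2 * (∑ k ∈ range N, |f k|) ^ 2 := by ring
      _ ≤ (N:ℝ)⁻¹ ^ 2 * ((∑ k ∈ range N, f k ^ 2) * N) := by
          exact mul_le_mul_of_nonneg_left hcs (by positivity)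
      _ = (N:ℝ)⁻¹ * ∑ k ∈ range N, f k ^ 2 := by field_simp
      _ ≤ B ^ 2 := h
  calc (N:ℝ)⁻¹ * ∑ k ∈ range N, |f k|
      = Real.sqrt (((N:ℝ)⁻¹ * ∑ k ∈ range N, |f k|) ^ 2) := (Real.sqrt_sq hL).symm
    _ ≤ Real.sqrt (B ^ 2) := Real.sqrt_le_sqrt hsq
    _ = B := Real.sqrt_sq hB

lemma findInterval {d : ℕ} (hd : 0 < d) (pts : Fin (d+1) → ℝ)
    {t : ℝ} (h0 : pts 0 ≤ t) (h1 : t ≤ pts (Fin.last d)) :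
    ∃ i : Fin d, pts i.castSucc ≤ t ∧ t ≤ pts i.succ := by
  classical
  set S : Finset (Fin d) := Finset.univ.filter (fun i => pts i.castSucc ≤ t) with hS
  have hne : S.Nonempty := by
    refine ⟨⟨0, hd⟩, ?_⟩
    simp only [hS, Finset.mem_filter, Finset.mem_univ, true_and]
    have : (⟨0, hd⟩ : Fin d).castSucc = 0 := rfl
    rw [this]; exact h0
  set i := S.max' hne with hi
  have hiS : pts i.castSucc ≤ t := by
    have := S.max'_mem hne
    simpa [hS] using this
  refine ⟨i, hiS, ?_⟩
  by_contra hcon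
  push_neg at hcon
  have hne_last : i.succ ≠ Fin.last d := by
    intro h
    rw [h] at hcon
    exact absurd h1 (not_le.mpr hcon)
  obtain ⟨j, hj⟩ := Fin.exists_castSucc_eq.mpr hne_last
  have hjS : j ∈ S := by
    simp only [hS, Finset.mem_filter, Finset.mem_univ, true_and, hj]
    exact hcon.le
  have hji : j ≤ i := S.le_max' j hjS
  have : i < j := by
    rw [← Fin.castSucc_lt_castSucc_iff, hj]
    exact Fin.castSucc_lt_succ
  exact absurd hji (not_le.mpr this)

lemma rpow_two_mul' {x : ℝ} (hx : 0 ≤ x) (β : ℝ) : x ^ (2 * β) = (x ^ β) ^ 2 := by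
  rw [mul_comm, Real.rpow_mul hx]
  norm_num


/-- interpolation error of the discretized Horvitz–Thompson estimator:
there is a constant `C₆` depending only on `C₃` such that for every possible sample `s`
and every `t ∈ [0,T]`, `|μ̂_d(t) - μ̂_N(t)| ≤ (C₆/λ) · max_i |t_{i+1} - t_i| ^ β`. -/
theorem discretization_error_bound (C₃ : ℝ) (hC₃ : 0 < C₃) :
    ∃ C₆ : ℝ, 0 < C₆ ∧
      ∀ (T : ℝ), 0 < T → ∀ (β : ℝ), 0 < β →
      ∀ (N n : ℕ) (Y : ℕ → ℝ → ℝ) (p : Finset ℕ → ℝ), IsDesign N n p →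
      (∀ k, ContinuousOn (Y k) (Set.Icc 0 T)) →
      ∀ lam : ℝ, 0 < lam → (∀ k ∈ Finset.range N, lam ≤ pi1 N p k) →
      (∀ s ∈ Set.Icc (0 : ℝ) T, ∀ t ∈ Set.Icc (0 : ℝ) T,
        (N : ℝ)⁻¹ * ∑ k ∈ Finset.range N, (Y k t - Y k s) ^ 2 ≤ C₃ * |t - s| ^ (2 * β)) →
      ∀ (d : ℕ) (hd : 0 < d) (pts : Fin (d + 1) → ℝ), StrictMono pts →
        pts 0 = 0 → pts (Fin.last d) = T →
      ∀ Ytil : ℕ → ℝ → ℝ,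
      (∀ k (i : Fin d), ∀ t ∈ Set.Icc (pts i.castSucc) (pts i.succ),
        Ytil k t = Y k (pts i.castSucc) +
          (Y k (pts i.succ) - Y k (pts i.castSucc)) / (pts i.succ - pts i.castSucc)
            * (t - pts i.castSucc)) →
      ∀ sam : Finset ℕ, p sam ≠ 0 →
      ∀ t ∈ Set.Icc (0 : ℝ) T,
        |htMean N p Ytil sam t - htMean N p Y sam t|
          ≤ C₆ / lam * meshR d hd pts ^ β := by
  refine ⟨2 * Real.sqrt C₃, by positivity, ?_⟩
  intro T hT β hβ N n Y p hdes hcont lam hlam hpi hhol d hd pts hmono hp0 hplast Ytil hYtil sam hsam t ht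
  have hsub := (hdes.supp sam hsam).1
  set m := meshR d hd pts with hm
  have hmesh : ∀ i : Fin d, |pts i.succ - pts i.castSucc| ≤ m := by
    intro i
    rw [hm]; unfold meshR
    exact Finset.le_sup' (fun j : Fin d => |pts j.succ - pts j.castSucc|) (Finset.mem_univ i)
  have hm0 : 0 ≤ m := le_trans (abs_nonneg _) (hmesh ⟨0, hd⟩)
  obtain ⟨i, hta, htb⟩ := findInterval (t := t) hd pts (by rw [hp0]; exact ht.1) (by rw [hplast]; exact ht.2)
  set a := pts i.castSucc with ha
  set b := pts i.succ with hb
  have hab : a < b := hmono (show i.castSucc < i.succ from Fin.castSucc_lt_succ)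
  have hIcc : ∀ j : Fin (d+1), pts j ∈ Set.Icc (0:ℝ) T := by
    intro j
    constructor
    · rw [← hp0]; exact hmono.monotone (Fin.zero_le j)
    · rw [← hplast]; exact hmono.monotone (Fin.le_last j)
  set B := Real.sqrt C₃ * m ^ β with hB
  have hB0 : 0 ≤ B := by positivity
  have bnd : ∀ u v : ℝ, u ∈ Set.Icc (0:ℝ) T → v ∈ Set.Icc (0:ℝ) T → |v - u| ≤ m →
      (N:ℝ)⁻¹ * ∑ k ∈ range N, |Y k v - Y k u| ≤ B := by
    intro u v hu hv hduv
    apply csAbs _ _ _ hB0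
    calc (N:ℝ)⁻¹ * ∑ k ∈ range N, (Y k v - Y k u) ^ 2 ≤ C₃ * |v - u| ^ (2*β) := hhol u hu v hv
      _ ≤ C₃ * m ^ (2*β) :=
          mul_le_mul_of_nonneg_left (Real.rpow_le_rpow (abs_nonneg _) hduv (by positivity)) hC₃.le
      _ = B ^ 2 := by rw [rpow_two_mul' hm0, hB, mul_pow, Real.sq_sqrt hC₃.le]
  have hfr0 : 0 ≤ (t - a)/(b - a) := div_nonneg (by linarith) (by linarith)
  have hfr1 : (t - a)/(b - a) ≤ 1 := by rw [div_le_one (by linarith)]; linarith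
  have hk : ∀ k, |Ytil k t - Y k t| ≤ |Y k t - Y k a| + |Y k b - Y k a| := by
    intro k
    rw [hYtil k i t ⟨hta, htb⟩, ← ha, ← hb]
    have he : Y k a + (Y k b - Y k a)/(b - a) * (t - a) - Y k t
        = (Y k a - Y k t) + (Y k b - Y k a) * ((t - a)/(b - a)) := by ring
    rw [he]
    calc |(Y k a - Y k t) + (Y k b - Y k a) * ((t - a)/(b - a))|
        ≤ |Y k a - Y k t| + |(Y k b - Y k a) * ((t - a)/(b - a))| := abs_add_le _ _
      _ = |Y k t - Y k a| + |Y k b - Y k a| * |(t - a)/(b - a)| := by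
          rw [abs_sub_comm, abs_mul]
      _ ≤ |Y k t - Y k a| + |Y k b - Y k a| * 1 := by
          gcongr
          rw [abs_of_nonneg hfr0]; exact hfr1
      _ = |Y k t - Y k a| + |Y k b - Y k a| := by rw [mul_one]
  have hpik : ∀ k ∈ sam, 0 < pi1 N p k ∧ lam ≤ pi1 N p k := by
    intro k hks
    have := hpi k (hsub hks)
    exact ⟨lt_of_lt_of_le hlam this, this⟩
  have hdiff : htMean N p Ytil sam t - htMean N p Y sam t
      = (N:ℝ)⁻¹ * ∑ k ∈ sam, (Ytil k t - Y k t) / pi1 N p k := by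
    simp only [htMean, ← mul_sub, ← Finset.sum_sub_distrib, sub_div]
  have hNi : (0:ℝ) ≤ (N:ℝ)⁻¹ := by positivity
  calc |htMean N p Ytil sam t - htMean N p Y sam t|
      = (N:ℝ)⁻¹ * |∑ k ∈ sam, (Ytil k t - Y k t) / pi1 N p k| := by
        rw [hdiff, abs_mul, abs_of_nonneg hNi]
    _ ≤ (N:ℝ)⁻¹ * ∑ k ∈ sam, |(Ytil k t - Y k t) / pi1 N p k| :=
        mul_le_mul_of_nonneg_left (Finset.abs_sum_le_sum_abs _ _) hNi
    _ ≤ (N:ℝ)⁻¹ * ∑ k ∈ sam, (|Y k t - Y k a| + |Y k b - Y k a|) / lam := by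
        apply mul_le_mul_of_nonneg_left _ hNi
        apply Finset.sum_le_sum
        intro k hks
        rw [abs_div, abs_of_pos (hpik k hks).1]
        exact div_le_div₀ (by positivity) (hk k) hlam (hpik k hks).2
    _ ≤ (N:ℝ)⁻¹ * ∑ k ∈ range N, (|Y k t - Y k a| + |Y k b - Y k a|) / lam := by
        apply mul_le_mul_of_nonneg_left _ hNi
        apply Finset.sum_le_sum_of_subset_of_nonneg hsub
        intros; positivity
    _ = lam⁻¹ * ((N:ℝ)⁻¹ * ∑ k ∈ range N, |Y k t - Y k a|
          + (N:ℝ)⁻¹ * ∑ k ∈ range N, |Y k b - Y k a|) := by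
        rw [← Finset.sum_div, Finset.sum_add_distrib]
        field_simp
    _ ≤ lam⁻¹ * (B + B) := by
        apply mul_le_mul_of_nonneg_left _ (by positivity)
        have h1 : |t - a| ≤ m := by
          rw [abs_of_nonneg (by linarith)]
          calc t - a ≤ b - a := by linarith
            _ ≤ |b - a| := le_abs_self _
            _ ≤ m := hmesh i
        have h2 : |b - a| ≤ m := hmesh i
        exact add_le_add (bnd a t (hIcc _) ht h1) (bnd a b (hIcc _) (hIcc _) h2)
    _ = 2 * Real.sqrt C₃ / lam * m ^ β := by rw [hB]; field_simp; ring
  done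

end
end

section
/- Suppose min_k π_k ≥ λ > 0, n · max_{k≠l} |Δ_{kl}| ≤ C₁, n ≤ N, and there are constants C₃ > 0 and β > 0 such that N^{-1} Σ_{k∈U} (Y_k(t) − Y_k(s))² ≤ C₃|t−s|^{2β} for all s,t ∈ [0,T]. Then there exists a constant C₇ depending only on λ, C₁ and C₃ such that, for all (s,t) ∈ [0,T] × [0,T], n · E[{μ̂_N(t) − μ_N(t) − μ̂_N(s) + μ_N(s)}²] ≤ C₇ |t−s|^{2β}. -/
open Finset MeasureTheory ProbabilityTheory Filter Topology

noncomputable section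

section AuxLemmas

variable {N n : ℕ} {p : Finset ℕ → ℝ}

lemma dExp_congr' {f g : Finset ℕ → ℝ} (h : ∀ s, p s ≠ 0 → f s = g s) :
    dExp N p f = dExp N p g :=
  Finset.sum_congr rfl fun s _ => by
    by_cases hs : p s = 0
    · simp [hs]
    · rw [h s hs]

lemma dExp_sum' {ι : Type*} (A : Finset ι) (g : ι → Finset ℕ → ℝ) :
    dExp N p (fun sam => ∑ k ∈ A, g k sam) = ∑ k ∈ A, dExp N p (g k) := by
  unfold dExp
  simp_rw [Finset.mul_sum]
  exact Finset.sum_comm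

lemma dExp_const_mul' (c : ℝ) (g : Finset ℕ → ℝ) :
    dExp N p (fun sam => c * g sam) = c * dExp N p g := by
  unfold dExp
  rw [Finset.mul_sum]
  exact Finset.sum_congr rfl fun s _ => by ring

lemma dExp_add' (f g : Finset ℕ → ℝ) :
    dExp N p (fun s => f s + g s) = dExp N p f + dExp N p g := by
  unfold dExp
  rw [← Finset.sum_add_distrib]
  exact Finset.sum_congr rfl fun s _ => by ring

lemma dExp_const' (hp : IsDesign N n p) (c : ℝ) : dExp N p (fun _ => c) = c := by
  unfold dExp
  rw [← Finset.sum_mul, hp.sum_one, one_mul]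

lemma pi1_nonneg' (hp : IsDesign N n p) (k : ℕ) : 0 ≤ pi1 N p k := by
  unfold pi1 dExp
  exact Finset.sum_nonneg fun s _ =>
    mul_nonneg (hp.nonneg s) (by dsimp only; split_ifs <;> norm_num)

lemma pi1_le_one' (hp : IsDesign N n p) (k : ℕ) : pi1 N p k ≤ 1 := by
  unfold pi1 dExp
  have : ∑ s ∈ (Finset.range N).powerset, p s * (if k ∈ s then (1:ℝ) else 0)
      ≤ ∑ s ∈ (Finset.range N).powerset, p s * 1 :=
    Finset.sum_le_sum fun s _ =>
      mul_le_mul_of_nonneg_left (by split_ifs <;> norm_num) (hp.nonneg s)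
  simpa [hp.sum_one] using this

lemma pi2_diag' (k : ℕ) : pi2 N p k k = pi1 N p k := by
  unfold pi2 pi1
  simp only [and_self]

lemma dExp_delta' (hp : IsDesign N n p) (k l : ℕ) :
    dExp N p (fun sam => (ind k sam - pi1 N p k) * (ind l sam - pi1 N p l))
      = Delta N p k l := by
  have h : (fun sam => (ind k sam - pi1 N p k) * (ind l sam - pi1 N p l))
      = fun sam => (if k ∈ sam ∧ l ∈ sam then (1:ℝ) else 0)
        + ((- pi1 N p k) * ind l sam
          + ((- pi1 N p l) * ind k sam + pi1 N p k * pi1 N p l)) := by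
    funext sam
    unfold ind
    by_cases hk : k ∈ sam <;> by_cases hl : l ∈ sam <;> simp [hk, hl] <;> ring
  rw [h]
  simp only [dExp_add', dExp_const_mul', dExp_const' hp]
  have h1 : dExp N p (fun sam => if k ∈ sam ∧ l ∈ sam then (1:ℝ) else 0) = pi2 N p k l := rfl
  have h2 : dExp N p (ind l) = pi1 N p l := rfl
  have h3 : dExp N p (ind k) = pi1 N p k := rfl
  rw [h1, h2, h3]
  unfold Delta
  ring

end AuxLemmas

/-- second-moment (variance) bound for the increments of the
Horvitz–Thompson estimator: there is a constant `C₇` depending only on `λ`, `C₁`, `C₃`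
with `n · E[(μ̂_N(t) - μ_N(t) - μ̂_N(s) + μ_N(s))²] ≤ C₇ |t-s|^{2β}`. -/
theorem increment_variance_bound (lam C₁ C₃ : ℝ) (hlam : 0 < lam) (hC₁ : 0 < C₁)
    (hC₃ : 0 < C₃) :
    ∃ C₇ : ℝ, 0 < C₇ ∧
      ∀ (T : ℝ), 0 < T → ∀ (β : ℝ), 0 < β →
      ∀ (N n : ℕ) (Y : ℕ → ℝ → ℝ) (p : Finset ℕ → ℝ), IsDesign N n p → n ≤ N →
      (∀ k, ContinuousOn (Y k) (Set.Icc 0 T)) →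
      (∀ k ∈ Finset.range N, lam ≤ pi1 N p k) →
      (∀ k ∈ Finset.range N, ∀ l ∈ Finset.range N, k ≠ l →
        (n : ℝ) * |Delta N p k l| ≤ C₁) →
      (∀ s ∈ Set.Icc (0 : ℝ) T, ∀ t ∈ Set.Icc (0 : ℝ) T,
        (N : ℝ)⁻¹ * ∑ k ∈ Finset.range N, (Y k t - Y k s) ^ 2 ≤ C₃ * |t - s| ^ (2 * β)) →
      ∀ s ∈ Set.Icc (0 : ℝ) T, ∀ t ∈ Set.Icc (0 : ℝ) T,
        (n : ℝ) * dExp N p (fun sam =>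
            (htMean N p Y sam t - popMean N Y t - htMean N p Y sam s + popMean N Y s) ^ 2)
          ≤ C₇ * |t - s| ^ (2 * β) := by
  refine ⟨(1 + C₁) * C₃ / lam ^ 2, by positivity, ?_⟩
  intro T hT β hβ N n Y p hp hnN hcont hπ hΔ hinc s hs t ht
  set R : ℝ := |t - s| ^ (2 * β) with hRdef
  have hR0 : 0 ≤ R := Real.rpow_nonneg (abs_nonneg _) _
  rcases Nat.eq_zero_or_pos n with hn0 | hn
  · rw [hn0]
    simp only [Nat.cast_zero, zero_mul]
    positivity
  -- now n ≥ 1, hence N ≥ 1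
  have hN : 0 < N := lt_of_lt_of_le hn hnN
  have hNR : (0:ℝ) < (N:ℝ) := by exact_mod_cast hN
  have hnR : (0:ℝ) < (n:ℝ) := by exact_mod_cast hn
  have hnNR : (n:ℝ) ≤ (N:ℝ) := by exact_mod_cast hnN
  set Z : ℕ → ℝ := fun k => Y k t - Y k s with hZdef
  set a : ℕ → ℝ := fun k => Z k / pi1 N p k with hadef
  have hπpos : ∀ k ∈ Finset.range N, 0 < pi1 N p k :=
    fun k hk => lt_of_lt_of_le hlam (hπ k hk)
  -- Step 1: identity for the increment on the support of the design
  have hD : ∀ sam : Finset ℕ, p sam ≠ 0 →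
      htMean N p Y sam t - popMean N Y t - htMean N p Y sam s + popMean N Y s
        = (N:ℝ)⁻¹ * ∑ k ∈ Finset.range N, a k * (ind k sam - pi1 N p k) := by
    intro sam hsam
    obtain ⟨hsub, -⟩ := hp.supp sam hsam
    have hsum : ∀ u : ℝ, ∑ k ∈ sam, Y k u / pi1 N p k
        = ∑ k ∈ Finset.range N, ind k sam * (Y k u / pi1 N p k) := by
      intro u
      unfold ind
      simp_rw [ite_mul, one_mul, zero_mul]
      rw [Finset.sum_ite_mem, Finset.inter_eq_right.mpr hsub]
    unfold htMean popMean
    rw [hsum t, hsum s]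
    have hcomb : ∀ A B C D : ℝ, (N:ℝ)⁻¹ * A - (N:ℝ)⁻¹ * B - (N:ℝ)⁻¹ * C + (N:ℝ)⁻¹ * D
        = (N:ℝ)⁻¹ * (A - B - C + D) := by intros; ring
    rw [hcomb]
    congr 1
    rw [← Finset.sum_sub_distrib, ← Finset.sum_sub_distrib, ← Finset.sum_add_distrib]
    refine Finset.sum_congr rfl fun k hk => ?_
    have hπk := (hπpos k hk).ne'
    simp only [hadef, hZdef]
    field_simp
    ring
  -- Step 2: the expectation as a double sum over Delta
  have hE : dExp N p (fun sam =>
        (htMean N p Y sam t - popMean N Y t - htMean N p Y sam s + popMean N Y s) ^ 2)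
      = ((N:ℝ)⁻¹) ^ 2 * ∑ k ∈ Finset.range N, ∑ l ∈ Finset.range N,
          (a k * a l) * Delta N p k l := by
    have hg : dExp N p (fun sam =>
          (htMean N p Y sam t - popMean N Y t - htMean N p Y sam s + popMean N Y s) ^ 2)
        = dExp N p (fun sam => ((N:ℝ)⁻¹) ^ 2 * ∑ k ∈ Finset.range N, ∑ l ∈ Finset.range N,
            (a k * a l) * ((ind k sam - pi1 N p k) * (ind l sam - pi1 N p l))) := by
      refine dExp_congr' fun sam hsam => ?_
      rw [hD sam hsam, mul_pow, sq (∑ k ∈ Finset.range N, a k * (ind k sam - pi1 N p k)),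
        Finset.sum_mul_sum]
      congr 1
      refine Finset.sum_congr rfl fun k _ => Finset.sum_congr rfl fun l _ => by ring
    rw [hg, dExp_const_mul']
    congr 1
    rw [dExp_sum']
    refine Finset.sum_congr rfl fun k _ => ?_
    rw [dExp_sum']
    refine Finset.sum_congr rfl fun l _ => ?_
    rw [dExp_const_mul', dExp_delta' hp]
  -- Step 3: termwise bound on the double sum
  have hterm : ∀ k ∈ Finset.range N, ∀ l ∈ Finset.range N,
      (a k * a l) * Delta N p k l
        ≤ (if k = l then a k ^ 2 else 0) + (C₁ / (n:ℝ)) * (|a k| * |a l|) := by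
    intro k hk l hl
    by_cases hkl : k = l
    · subst hkl
      simp only [eq_self_iff_true, if_true]
      have hd : Delta N p k k = pi1 N p k - pi1 N p k * pi1 N p k := by
        unfold Delta
        rw [pi2_diag']
      have h0 : 0 ≤ pi1 N p k := pi1_nonneg' hp k
      have h1 : pi1 N p k ≤ 1 := pi1_le_one' hp k
      have hd1 : Delta N p k k ≤ 1 := by rw [hd]; nlinarith
      have hd0 : 0 ≤ Delta N p k k := by rw [hd]; nlinarith
      have hpos : (0:ℝ) ≤ C₁ / (n:ℝ) * (|a k| * |a k|) := by positivity
      nlinarith [mul_nonneg (sub_nonneg.mpr hd1) (sq_nonneg (a k)), sq_nonneg (a k)]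
    · simp only [if_neg hkl]
      have hΔ' : |Delta N p k l| ≤ C₁ / (n:ℝ) := by
        rw [le_div_iff₀ hnR, mul_comm]
        exact hΔ k hk l hl hkl
      calc (a k * a l) * Delta N p k l ≤ |(a k * a l) * Delta N p k l| := le_abs_self _
        _ = |a k| * |a l| * |Delta N p k l| := by rw [abs_mul, abs_mul]
        _ ≤ |a k| * |a l| * (C₁ / (n:ℝ)) :=
            mul_le_mul_of_nonneg_left hΔ' (by positivity)
        _ = 0 + C₁ / (n:ℝ) * (|a k| * |a l|) := by ring
  set A2 : ℝ := ∑ k ∈ Finset.range N, a k ^ 2 with hA2def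
  set A1 : ℝ := ∑ k ∈ Finset.range N, |a k| with hA1def
  set SZ : ℝ := ∑ k ∈ Finset.range N, Z k ^ 2 with hSZdef
  have hSbound : ∑ k ∈ Finset.range N, ∑ l ∈ Finset.range N, (a k * a l) * Delta N p k l
      ≤ A2 + (C₁ / (n:ℝ)) * A1 ^ 2 := by
    calc ∑ k ∈ Finset.range N, ∑ l ∈ Finset.range N, (a k * a l) * Delta N p k l
        ≤ ∑ k ∈ Finset.range N, ∑ l ∈ Finset.range N,
            ((if k = l then a k ^ 2 else 0) + (C₁ / (n:ℝ)) * (|a k| * |a l|)) :=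
          Finset.sum_le_sum fun k hk => Finset.sum_le_sum fun l hl => hterm k hk l hl
      _ = A2 + (C₁ / (n:ℝ)) * A1 ^ 2 := by
          simp_rw [Finset.sum_add_distrib]
          congr 1
          · refine Finset.sum_congr rfl fun k hk => ?_
            rw [Finset.sum_ite_eq (Finset.range N) k (fun _ => a k ^ 2), if_pos hk]
          · rw [sq A1, hA1def, Finset.sum_mul_sum]
            simp_rw [Finset.mul_sum]
      -- end
  have hA2Z : A2 ≤ SZ / lam ^ 2 := by
    rw [hA2def, hSZdef, Finset.sum_div]
    refine Finset.sum_le_sum fun k hk => ?_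
    have h1 : lam ≤ pi1 N p k := hπ k hk
    have h2 : 0 < pi1 N p k := hπpos k hk
    have : a k ^ 2 = Z k ^ 2 / pi1 N p k ^ 2 := by
      simp only [hadef]
      rw [div_pow]
    rw [this]
    apply div_le_div_of_nonneg_left (sq_nonneg _) (by positivity)
    nlinarith
  have hA1sq : A1 ^ 2 ≤ (N:ℝ) * A2 := by
    have := sq_sum_le_card_mul_sum_sq (s := Finset.range N) (f := fun k => |a k|)
    simpa [sq_abs, Finset.card_range] using this
  have hZle : (N:ℝ)⁻¹ * SZ ≤ C₃ * R := hinc s hs t ht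
  have hA20 : 0 ≤ A2 := Finset.sum_nonneg fun k _ => sq_nonneg _
  have hSZ0 : 0 ≤ SZ := Finset.sum_nonneg fun k _ => sq_nonneg _
  -- Step 4: put everything together
  rw [hE]
  have key : (n:ℝ) * (((N:ℝ)⁻¹) ^ 2 * ∑ k ∈ Finset.range N, ∑ l ∈ Finset.range N,
      (a k * a l) * Delta N p k l)
      ≤ (n:ℝ) * (((N:ℝ)⁻¹) ^ 2 * (A2 + (C₁ / (n:ℝ)) * A1 ^ 2)) := by
    apply mul_le_mul_of_nonneg_left _ (le_of_lt hnR)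
    exact mul_le_mul_of_nonneg_left hSbound (by positivity)
  refine le_trans key ?_
  have e1 : (n:ℝ) * (((N:ℝ)⁻¹) ^ 2 * (A2 + (C₁ / (n:ℝ)) * A1 ^ 2))
      = (n:ℝ) * ((N:ℝ)⁻¹) ^ 2 * A2 + C₁ * ((N:ℝ)⁻¹) ^ 2 * A1 ^ 2 := by
    field_simp
  rw [e1]
  have e2 : (n:ℝ) * ((N:ℝ)⁻¹) ^ 2 * A2 + C₁ * ((N:ℝ)⁻¹) ^ 2 * A1 ^ 2
      ≤ (N:ℝ) * ((N:ℝ)⁻¹) ^ 2 * A2 + C₁ * ((N:ℝ)⁻¹) ^ 2 * ((N:ℝ) * A2) := by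
    gcongr
  refine le_trans e2 ?_
  have e3 : (N:ℝ) * ((N:ℝ)⁻¹) ^ 2 * A2 + C₁ * ((N:ℝ)⁻¹) ^ 2 * ((N:ℝ) * A2)
      = (1 + C₁) * ((N:ℝ)⁻¹ * A2) := by
    field_simp
  rw [e3]
  have e4 : (1 + C₁) * ((N:ℝ)⁻¹ * A2) ≤ (1 + C₁) * ((N:ℝ)⁻¹ * (SZ / lam ^ 2)) := by
    gcongr
  refine le_trans e4 ?_
  have e5 : (1 + C₁) * ((N:ℝ)⁻¹ * (SZ / lam ^ 2))
      = ((1 + C₁) / lam ^ 2) * ((N:ℝ)⁻¹ * SZ) := by ring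
  rw [e5]
  calc ((1 + C₁) / lam ^ 2) * ((N:ℝ)⁻¹ * SZ)
      ≤ ((1 + C₁) / lam ^ 2) * (C₃ * R) := by gcongr
    _ = (1 + C₁) * C₃ / lam ^ 2 * R := by ring

end
end

section
/- (Proposition 1) Under Assumptions 1–4, if the discretization scheme satisfies max_{1≤i≤d_N−1} |t_{i+1} − t_i|^{2β} = o(n^{-1}) as N → ∞, then there exists a constant C such that for all N, √n · E[sup_{t∈[0,T]} |μ̂_d(t) − μ_N(t)|] < C. -/
open Finset MeasureTheory ProbabilityTheory Filter Topology

noncomputable section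

namespace PropAux

open Finset

theorem dExp_mono {N : ℕ} {p : Finset ℕ → ℝ} (hp : ∀ s, 0 ≤ p s) {f g : Finset ℕ → ℝ}
    (h : ∀ s, p s ≠ 0 → f s ≤ g s) : dExp N p f ≤ dExp N p g := by
  refine Finset.sum_le_sum fun s _ => ?_
  rcases eq_or_ne (p s) 0 with h0 | h0
  · simp [h0]
  · exact mul_le_mul_of_nonneg_left (h s h0) (hp s)

theorem dExp_congr {N : ℕ} {p : Finset ℕ → ℝ} {f g : Finset ℕ → ℝ}
    (h : ∀ s, p s ≠ 0 → f s = g s) : dExp N p f = dExp N p g := by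
  refine Finset.sum_congr rfl fun s _ => ?_
  rcases eq_or_ne (p s) 0 with h0 | h0
  · simp [h0]
  · rw [h s h0]

theorem dExp_add {N : ℕ} {p : Finset ℕ → ℝ} (f g : Finset ℕ → ℝ) :
    dExp N p (fun s => f s + g s) = dExp N p f + dExp N p g := by
  simp [dExp, mul_add, Finset.sum_add_distrib]

theorem dExp_const {N n : ℕ} {p : Finset ℕ → ℝ} (hd : IsDesign N n p) (c : ℝ) :
    dExp N p (fun _ => c) = c := by
  simp [dExp, ← Finset.sum_mul, hd.sum_one]

theorem dExp_const_mul {N : ℕ} {p : Finset ℕ → ℝ} (c : ℝ) (f : Finset ℕ → ℝ) :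
    dExp N p (fun s => c * f s) = c * dExp N p f := by
  simp only [dExp, Finset.mul_sum]
  exact Finset.sum_congr rfl fun s _ => by ring

theorem dExp_sum {N : ℕ} {p : Finset ℕ → ℝ} {ι : Type*} (t : Finset ι) (f : ι → Finset ℕ → ℝ) :
    dExp N p (fun s => ∑ i ∈ t, f i s) = ∑ i ∈ t, dExp N p (f i) := by
  simp [dExp, Finset.mul_sum]
  rw [Finset.sum_comm]

theorem dExp_nonneg {N : ℕ} {p : Finset ℕ → ℝ} (hp : ∀ s, 0 ≤ p s) {f : Finset ℕ → ℝ}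
    (h : ∀ s, p s ≠ 0 → 0 ≤ f s) : 0 ≤ dExp N p f := by
  refine Finset.sum_nonneg fun s _ => ?_
  rcases eq_or_ne (p s) 0 with h0 | h0
  · simp [h0]
  · exact mul_nonneg (hp s) (h s h0)

/-- Cauchy–Schwarz: E|f| ≤ √(E f²). -/
theorem dExp_abs_le_sqrt {N n : ℕ} {p : Finset ℕ → ℝ} (hd : IsDesign N n p)
    (f : Finset ℕ → ℝ) :
    dExp N p (fun s => |f s|) ≤ Real.sqrt (dExp N p (fun s => f s ^ 2)) := by
  have h2 : 0 ≤ dExp N p (fun s => f s ^ 2) :=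
    dExp_nonneg hd.nonneg fun s _ => sq_nonneg _
  rw [Real.le_sqrt (dExp_nonneg hd.nonneg fun s _ => abs_nonneg _) h2]
  calc dExp N p (fun s => |f s|) ^ 2
      = (∑ s ∈ (Finset.range N).powerset, Real.sqrt (p s) * (Real.sqrt (p s) * |f s|)) ^ 2 := by
        unfold dExp
        congr 1
        refine Finset.sum_congr rfl fun s _ => ?_
        rw [← mul_assoc, Real.mul_self_sqrt (hd.nonneg s)]
    _ ≤ (∑ s ∈ (Finset.range N).powerset, Real.sqrt (p s) ^ 2) *
        ∑ s ∈ (Finset.range N).powerset, (Real.sqrt (p s) * |f s|) ^ 2 :=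
        Finset.sum_mul_sq_le_sq_mul_sq _ _ _
    _ = dExp N p (fun s => f s ^ 2) := by
        have e1 : ∑ s ∈ (Finset.range N).powerset, Real.sqrt (p s) ^ 2 = 1 := by
          rw [← hd.sum_one]
          exact Finset.sum_congr rfl fun s _ => Real.sq_sqrt (hd.nonneg s)
        rw [e1, one_mul]
        unfold dExp
        refine Finset.sum_congr rfl fun s _ => ?_
        rw [mul_pow, Real.sq_sqrt (hd.nonneg s), sq_abs]

/-- E√F ≤ √(E F) for F ≥ 0 on the support. -/
theorem dExp_sqrt_le_sqrt {N n : ℕ} {p : Finset ℕ → ℝ} (hd : IsDesign N n p)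
    (F : Finset ℕ → ℝ) (hF : ∀ s, p s ≠ 0 → 0 ≤ F s) :
    dExp N p (fun s => Real.sqrt (F s)) ≤ Real.sqrt (dExp N p F) := by
  have := dExp_abs_le_sqrt hd (fun s => Real.sqrt (F s))
  calc dExp N p (fun s => Real.sqrt (F s))
      = dExp N p (fun s => |Real.sqrt (F s)|) := by
        refine dExp_congr fun s _ => ?_
        rw [abs_of_nonneg (Real.sqrt_nonneg _)]
    _ ≤ Real.sqrt (dExp N p (fun s => Real.sqrt (F s) ^ 2)) := this
    _ = Real.sqrt (dExp N p F) := by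
        congr 1
        refine dExp_congr fun s hs => ?_
        rw [Real.sq_sqrt (hF s hs)]

/-- The indicator-form Horvitz–Thompson error for data `z`. -/
def errI (N : ℕ) (p : Finset ℕ → ℝ) (z : ℕ → ℝ) (s : Finset ℕ) : ℝ :=
  (N : ℝ)⁻¹ * ∑ k ∈ Finset.range N, z k / pi1 N p k * ind k s -
    (N : ℝ)⁻¹ * ∑ k ∈ Finset.range N, z k

/-- The sample-sum form Horvitz–Thompson error for data `z`. -/
def errS (N : ℕ) (p : Finset ℕ → ℝ) (z : ℕ → ℝ) (s : Finset ℕ) : ℝ :=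
  (N : ℝ)⁻¹ * ∑ k ∈ s, z k / pi1 N p k - (N : ℝ)⁻¹ * ∑ k ∈ Finset.range N, z k

theorem errI_eq_errS {N : ℕ} {p : Finset ℕ → ℝ} {s : Finset ℕ}
    (hsub : s ⊆ Finset.range N) (z : ℕ → ℝ) : errI N p z s = errS N p z s := by
  unfold errI errS
  congr 1
  congr 1
  calc ∑ k ∈ Finset.range N, z k / pi1 N p k * ind k s
      = ∑ k ∈ Finset.range N, (if k ∈ s then z k / pi1 N p k else 0) := by
        refine Finset.sum_congr rfl fun k _ => ?_
        unfold ind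
        by_cases hk : k ∈ s <;> simp [hk]
    _ = ∑ k ∈ Finset.range N ∩ s, z k / pi1 N p k := Finset.sum_ite_mem _ _ _
    _ = ∑ k ∈ s, z k / pi1 N p k := by
        rw [Finset.inter_eq_right.mpr hsub]

theorem errS_sub {N : ℕ} {p : Finset ℕ → ℝ} (z w : ℕ → ℝ) (s : Finset ℕ) :
    errS N p (fun k => z k - w k) s = errS N p z s - errS N p w s := by
  simp only [errS, sub_div, Finset.sum_sub_distrib, mul_sub]
  ring

theorem dExp_ind {N : ℕ} {p : Finset ℕ → ℝ} (k : ℕ) :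
    dExp N p (fun s => ind k s) = pi1 N p k := rfl

theorem dExp_ind_mul_ind {N : ℕ} {p : Finset ℕ → ℝ} (k l : ℕ) :
    dExp N p (fun s => ind k s * ind l s) = pi2 N p k l := by
  refine Finset.sum_congr rfl fun s _ => ?_
  congr 1
  unfold ind
  by_cases hk : k ∈ s <;> by_cases hl : l ∈ s <;> simp [hk, hl]

theorem pi2_self {N : ℕ} {p : Finset ℕ → ℝ} (k : ℕ) : pi2 N p k k = pi1 N p k := by
  unfold pi2 pi1
  exact Finset.sum_congr rfl fun s _ => by simp

/-- `E[(I_k - π_k)(I_l - π_l)] = Δ_{kl}`. -/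
theorem dExp_centered {N n : ℕ} {p : Finset ℕ → ℝ} (hd : IsDesign N n p) (k l : ℕ) :
    dExp N p (fun s => (ind k s - pi1 N p k) * (ind l s - pi1 N p l)) = Delta N p k l := by
  have expand : ∀ s, (ind k s - pi1 N p k) * (ind l s - pi1 N p l) =
      ind k s * ind l s + ((- pi1 N p k) * ind l s +
        ((- pi1 N p l) * ind k s + pi1 N p k * pi1 N p l)) := fun s => by ring
  calc dExp N p (fun s => (ind k s - pi1 N p k) * (ind l s - pi1 N p l))
      = dExp N p (fun s => ind k s * ind l s) +
        (dExp N p (fun s => (- pi1 N p k) * ind l s) +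
          (dExp N p (fun s => (- pi1 N p l) * ind k s) +
            dExp N p (fun _ => pi1 N p k * pi1 N p l))) := by
        rw [← dExp_add, ← dExp_add, ← dExp_add]
        exact dExp_congr fun s _ => expand s
    _ = Delta N p k l := by
        rw [dExp_ind_mul_ind, dExp_const_mul, dExp_const_mul, dExp_ind, dExp_ind,
          dExp_const hd, Delta]
        ring

theorem exists_supp {N n : ℕ} {p : Finset ℕ → ℝ} (hd : IsDesign N n p) :
    ∃ s, p s ≠ 0 := by
  by_contra h
  push_neg at h
  have := hd.sum_one
  simp only [h, zero_mul, Finset.sum_const_zero] at this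
  norm_num at this

theorem n_le_N {N n : ℕ} {p : Finset ℕ → ℝ} (hd : IsDesign N n p) : n ≤ N := by
  obtain ⟨s, hs⟩ := exists_supp hd
  obtain ⟨hsub, hcard⟩ := hd.supp s hs
  calc n = s.card := hcard.symm
    _ ≤ (Finset.range N).card := Finset.card_le_card hsub
    _ = N := Finset.card_range N

/-- Key second-moment bound for the Horvitz–Thompson error. -/
theorem var_bound {N n : ℕ} {p : Finset ℕ → ℝ} (hd : IsDesign N n p) (hn : 1 ≤ n)
    {lam C₁ : ℝ} (hlam : 0 < lam) (hC₁ : 0 ≤ C₁)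
    (hpi : ∀ k ∈ Finset.range N, lam ≤ pi1 N p k)
    (hΔ : ∀ k ∈ Finset.range N, ∀ l ∈ Finset.range N, k ≠ l →
      (n : ℝ) * |Delta N p k l| ≤ C₁)
    (z : ℕ → ℝ) :
    dExp N p (fun s => errI N p z s ^ 2) ≤
      (lam⁻¹ + C₁ * lam⁻¹ ^ 2) / n * ((N : ℝ)⁻¹ * ∑ k ∈ Finset.range N, z k ^ 2) := by
  have hpi0 : ∀ k ∈ Finset.range N, (0:ℝ) < pi1 N p k := fun k hk => lt_of_lt_of_le hlam (hpi k hk)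
  set c : ℕ → ℝ := fun k => z k / pi1 N p k with hc
  -- centered form
  have herr : ∀ s, errI N p z s =
      (N : ℝ)⁻¹ * ∑ k ∈ Finset.range N, c k * (ind k s - pi1 N p k) := by
    intro s
    have hz : ∀ k ∈ Finset.range N, c k * pi1 N p k = z k := fun k hk =>
      div_mul_cancel₀ _ (ne_of_gt (hpi0 k hk))
    unfold errI
    rw [show ∑ k ∈ Finset.range N, z k = ∑ k ∈ Finset.range N, c k * pi1 N p k from
      Finset.sum_congr rfl fun k hk => (hz k hk).symm]
    rw [← mul_sub, ← Finset.sum_sub_distrib]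
    congr 1
    exact Finset.sum_congr rfl fun k _ => by ring
  -- expectation identity
  have key : dExp N p (fun s => errI N p z s ^ 2) =
      ((N : ℝ)⁻¹) ^ 2 * ∑ k ∈ Finset.range N, ∑ l ∈ Finset.range N,
        c k * c l * Delta N p k l := by
    have e1 : ∀ s, errI N p z s ^ 2 = ((N : ℝ)⁻¹) ^ 2 *
        ∑ k ∈ Finset.range N, ∑ l ∈ Finset.range N,
          c k * c l * ((ind k s - pi1 N p k) * (ind l s - pi1 N p l)) := by
      intro s
      rw [herr s, mul_pow,
        pow_two (∑ k ∈ Finset.range N, c k * (ind k s - pi1 N p k)), Finset.sum_mul_sum]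
      congr 1
      exact Finset.sum_congr rfl fun k _ => Finset.sum_congr rfl fun l _ => by ring
    calc dExp N p (fun s => errI N p z s ^ 2)
        = dExp N p (fun s => ((N : ℝ)⁻¹) ^ 2 *
            ∑ k ∈ Finset.range N, ∑ l ∈ Finset.range N,
              c k * c l * ((ind k s - pi1 N p k) * (ind l s - pi1 N p l))) :=
          dExp_congr fun s _ => e1 s
      _ = ((N : ℝ)⁻¹) ^ 2 * ∑ k ∈ Finset.range N, ∑ l ∈ Finset.range N,
            c k * c l * Delta N p k l := by
          rw [dExp_const_mul]
          congr 1
          rw [dExp_sum]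
          refine Finset.sum_congr rfl fun k hk => ?_
          rw [dExp_sum]
          refine Finset.sum_congr rfl fun l hl => ?_
          rw [dExp_const_mul, dExp_centered hd]
  rw [key]
  -- split diagonal and off-diagonal
  have split : ∑ k ∈ Finset.range N, ∑ l ∈ Finset.range N, c k * c l * Delta N p k l
      = (∑ k ∈ Finset.range N, c k * c k * Delta N p k k) +
        ∑ k ∈ Finset.range N, ∑ l ∈ (Finset.range N).erase k, c k * c l * Delta N p k l := by
    rw [← Finset.sum_add_distrib]
    refine Finset.sum_congr rfl fun k hk => ?_
    exact (Finset.add_sum_erase _ (fun l => c k * c l * Delta N p k l) hk).symm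
  have hN1 : 1 ≤ N := le_trans hn (n_le_N hd)
  have hNpos : (0:ℝ) < (N:ℝ) := by exact_mod_cast Nat.pos_of_ne_zero (by omega)
  have hnpos : (0:ℝ) < (n:ℝ) := by exact_mod_cast hn
  set S2 := ∑ k ∈ Finset.range N, z k ^ 2 with hS2
  set S1 := ∑ k ∈ Finset.range N, |z k| with hS1
  have hS2nn : 0 ≤ S2 := Finset.sum_nonneg fun k _ => sq_nonneg _
  have hS1nn : 0 ≤ S1 := Finset.sum_nonneg fun k _ => abs_nonneg _
  -- diagonal bound
  have hdiag : ∑ k ∈ Finset.range N, c k * c k * Delta N p k k ≤ lam⁻¹ * S2 := by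
    rw [hS2, Finset.mul_sum]
    refine Finset.sum_le_sum fun k hk => ?_
    have hπ : lam ≤ pi1 N p k := hpi k hk
    have hπ0 : 0 < pi1 N p k := hpi0 k hk
    have hΔkk : Delta N p k k = pi1 N p k - pi1 N p k ^ 2 := by
      rw [Delta, pi2_self]; ring
    have hcc : c k * c k * Delta N p k k = z k ^ 2 * ((1 - pi1 N p k) / pi1 N p k) := by
      rw [hΔkk, hc]
      field_simp
    rw [hcc, mul_comm (lam⁻¹) (z k ^ 2)]
    refine mul_le_mul_of_nonneg_left ?_ (sq_nonneg _)
    rw [← one_div]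
    exact div_le_div₀ zero_le_one (by linarith : 1 - pi1 N p k ≤ 1) hlam hπ
  -- off-diagonal bound
  have hoff : ∑ k ∈ Finset.range N, ∑ l ∈ (Finset.range N).erase k,
      c k * c l * Delta N p k l ≤ C₁ / n * lam⁻¹ ^ 2 * S1 ^ 2 := by
    have step1 : ∑ k ∈ Finset.range N, ∑ l ∈ (Finset.range N).erase k,
        c k * c l * Delta N p k l ≤
        ∑ k ∈ Finset.range N, ∑ l ∈ (Finset.range N).erase k,
          C₁ / n * lam⁻¹ ^ 2 * (|z k| * |z l|) := by
      refine Finset.sum_le_sum fun k hk => Finset.sum_le_sum fun l hl => ?_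
      have hlmem : l ∈ Finset.range N := Finset.mem_of_mem_erase hl
      have hne : k ≠ l := (Finset.ne_of_mem_erase hl).symm
      have hΔkl : |Delta N p k l| ≤ C₁ / n := by
        rw [le_div_iff₀ hnpos, mul_comm]
        exact hΔ k hk l hlmem hne
      have hck : |c k| ≤ |z k| * lam⁻¹ := by
        rw [hc]
        simp only [abs_div]
        rw [abs_of_pos (hpi0 k hk), div_eq_mul_inv]
        exact mul_le_mul_of_nonneg_left (inv_anti₀ hlam (hpi k hk)) (abs_nonneg _)
      have hcl : |c l| ≤ |z l| * lam⁻¹ := by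
        rw [hc]
        simp only [abs_div]
        rw [abs_of_pos (hpi0 l hlmem), div_eq_mul_inv]
        exact mul_le_mul_of_nonneg_left (inv_anti₀ hlam (hpi l hlmem)) (abs_nonneg _)
      calc c k * c l * Delta N p k l ≤ |c k * c l * Delta N p k l| := le_abs_self _
        _ = |c k| * |c l| * |Delta N p k l| := by rw [abs_mul, abs_mul]
        _ ≤ (|z k| * lam⁻¹) * (|z l| * lam⁻¹) * (C₁ / n) := by
            refine mul_le_mul ?_ hΔkl (abs_nonneg _) ?_
            · exact mul_le_mul hck hcl (abs_nonneg _)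
                (mul_nonneg (abs_nonneg _) (inv_nonneg.2 (le_of_lt hlam)))
            · positivity
        _ = C₁ / n * lam⁻¹ ^ 2 * (|z k| * |z l|) := by ring
    refine le_trans step1 ?_
    have step2 : ∑ k ∈ Finset.range N, ∑ l ∈ (Finset.range N).erase k,
        C₁ / n * lam⁻¹ ^ 2 * (|z k| * |z l|) ≤
        ∑ k ∈ Finset.range N, ∑ l ∈ Finset.range N,
          C₁ / n * lam⁻¹ ^ 2 * (|z k| * |z l|) := by
      refine Finset.sum_le_sum fun k hk => ?_
      refine Finset.sum_le_sum_of_subset_of_nonneg (Finset.erase_subset _ _) fun l _ _ => ?_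
      positivity
    refine le_trans step2 (le_of_eq ?_)
    rw [hS1, sq (∑ k ∈ Finset.range N, |z k|), Finset.sum_mul_sum, Finset.mul_sum]
    exact Finset.sum_congr rfl fun k _ => by
      rw [Finset.mul_sum]
  -- combine
  rw [split]
  have hAle : (N:ℝ)⁻¹ ≤ (n:ℝ)⁻¹ := by
    apply inv_anti₀ hnpos
    exact_mod_cast n_le_N hd
  have hCS : S1 ^ 2 ≤ (N:ℝ) * S2 := by
    have := Finset.sum_mul_sq_le_sq_mul_sq (Finset.range N) (fun _ => (1:ℝ)) (fun k => |z k|)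
    simp only [one_mul, one_pow, Finset.sum_const, Finset.card_range, nsmul_eq_mul, mul_one,
      sq_abs] at this
    calc S1 ^ 2 = (∑ k ∈ Finset.range N, 1 * |z k|) ^ 2 := by
          rw [hS1]; congr 1; exact Finset.sum_congr rfl fun k _ => (one_mul _).symm
      _ ≤ (∑ _k ∈ Finset.range N, (1:ℝ) ^ 2) * ∑ k ∈ Finset.range N, |z k| ^ 2 :=
          Finset.sum_mul_sq_le_sq_mul_sq _ _ _
      _ = (N:ℝ) * S2 := by
          simp [hS2, sq_abs]
  have hANN : ((N:ℝ)⁻¹) * (N:ℝ) = 1 := inv_mul_cancel₀ (ne_of_gt hNpos)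
  calc ((N:ℝ)⁻¹) ^ 2 * ((∑ k ∈ Finset.range N, c k * c k * Delta N p k k) +
        ∑ k ∈ Finset.range N, ∑ l ∈ (Finset.range N).erase k, c k * c l * Delta N p k l)
      ≤ ((N:ℝ)⁻¹) ^ 2 * (lam⁻¹ * S2 + C₁ / n * lam⁻¹ ^ 2 * S1 ^ 2) :=
        mul_le_mul_of_nonneg_left (add_le_add hdiag hoff) (sq_nonneg _)
    _ ≤ ((N:ℝ)⁻¹) ^ 2 * (lam⁻¹ * S2 + C₁ / n * lam⁻¹ ^ 2 * ((N:ℝ) * S2)) := by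
        refine mul_le_mul_of_nonneg_left (add_le_add_right ?_ _) (sq_nonneg _)
        exact mul_le_mul_of_nonneg_left hCS (by positivity)
    _ = lam⁻¹ * ((N:ℝ)⁻¹ * ((N:ℝ)⁻¹ * S2)) +
        C₁ / n * lam⁻¹ ^ 2 * ((((N:ℝ)⁻¹) * (N:ℝ)) * ((N:ℝ)⁻¹ * S2)) := by ring
    _ ≤ lam⁻¹ * ((n:ℝ)⁻¹ * ((N:ℝ)⁻¹ * S2)) +
        C₁ / n * lam⁻¹ ^ 2 * (1 * ((N:ℝ)⁻¹ * S2)) := by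
        rw [hANN]
        refine add_le_add (mul_le_mul_of_nonneg_left
          (mul_le_mul_of_nonneg_right hAle (by positivity)) (by positivity)) le_rfl
    _ = (lam⁻¹ + C₁ * lam⁻¹ ^ 2) / n * ((N:ℝ)⁻¹ * S2) := by ring

/-- Cauchy–Schwarz averaging: mean of |w| is at most √(mean of w²). -/
theorem avg_abs_le (N : ℕ) (w : ℕ → ℝ) :
    (N : ℝ)⁻¹ * ∑ k ∈ Finset.range N, |w k| ≤
      Real.sqrt ((N : ℝ)⁻¹ * ∑ k ∈ Finset.range N, w k ^ 2) := by
  rcases Nat.eq_zero_or_pos N with hN | hN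
  · simp [hN]
  have hNpos : (0:ℝ) < N := by exact_mod_cast hN
  have hS2 : (0:ℝ) ≤ ∑ k ∈ Finset.range N, w k ^ 2 :=
    Finset.sum_nonneg fun k _ => sq_nonneg _
  rw [Real.le_sqrt (by positivity) (by positivity)]
  have hCS : (∑ k ∈ Finset.range N, |w k|) ^ 2 ≤
      (N : ℝ) * ∑ k ∈ Finset.range N, w k ^ 2 := by
    calc (∑ k ∈ Finset.range N, |w k|) ^ 2
        = (∑ k ∈ Finset.range N, 1 * |w k|) ^ 2 := by simp
      _ ≤ (∑ _k ∈ Finset.range N, (1:ℝ) ^ 2) * ∑ k ∈ Finset.range N, |w k| ^ 2 :=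
          Finset.sum_mul_sq_le_sq_mul_sq _ _ _
      _ = (N : ℝ) * ∑ k ∈ Finset.range N, w k ^ 2 := by simp [sq_abs]
  calc ((N : ℝ)⁻¹ * ∑ k ∈ Finset.range N, |w k|) ^ 2
      = ((N:ℝ)⁻¹)^2 * (∑ k ∈ Finset.range N, |w k|) ^ 2 := by ring
    _ ≤ ((N:ℝ)⁻¹)^2 * ((N : ℝ) * ∑ k ∈ Finset.range N, w k ^ 2) :=
        mul_le_mul_of_nonneg_left hCS (sq_nonneg _)
    _ = ((N:ℝ)⁻¹ * (N:ℝ)) * ((N:ℝ)⁻¹ * ∑ k ∈ Finset.range N, w k ^ 2) := by ring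
    _ = (N : ℝ)⁻¹ * ∑ k ∈ Finset.range N, w k ^ 2 := by
        rw [inv_mul_cancel₀ (ne_of_gt hNpos), one_mul]

/-- Geometric series partial-sum bound. -/
theorem geom_le {r : ℝ} (h0 : 0 ≤ r) (h1 : r < 1) (J : ℕ) :
    ∑ i ∈ Finset.range J, r ^ i ≤ (1 - r)⁻¹ := by
  have hsum : HasSum (fun n : ℕ => r ^ n) (1 - r)⁻¹ :=
    hasSum_geometric_of_lt_one h0 h1
  calc ∑ i ∈ Finset.range J, r ^ i
      ≤ ∑' i : ℕ, r ^ i := Summable.sum_le_tsum _ (fun i _ => pow_nonneg h0 i) hsum.summable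
    _ = (1 - r)⁻¹ := hsum.tsum_eq

theorem sqrt_rpow_two {x β : ℝ} (hx : 0 ≤ x) : Real.sqrt (x ^ (2 * β)) = x ^ β := by
  have : x ^ (2 * β) = (x ^ β) ^ 2 := by
    rw [← Real.rpow_natCast (x ^ β) 2, ← Real.rpow_mul hx]
    norm_num
    ring_nf
  rw [this, Real.sqrt_sq (Real.rpow_nonneg hx β)]

theorem floor_parent {T : ℝ} (hT : 0 < T) (t : ℝ) (j : ℕ) :
    ⌊t * 2 ^ j / T⌋₊ = ⌊t * 2 ^ (j + 1) / T⌋₊ / 2 := by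
  rw [← Nat.floor_div_ofNat (t * 2 ^ (j+1) / T) 2]
  congr 1
  field_simp
  ring

theorem floor_le_pow {T : ℝ} (hT : 0 < T) {t : ℝ} (ht : t ≤ T) (j : ℕ) :
    ⌊t * 2 ^ j / T⌋₊ ≤ 2 ^ j := by
  have h : t * 2 ^ j / T ≤ ((2 ^ j : ℕ) : ℝ) := by
    push_cast
    rw [div_le_iff₀ hT]
    have : (0:ℝ) < 2 ^ j := by positivity
    nlinarith
  calc ⌊t * 2 ^ j / T⌋₊ ≤ ⌊((2 ^ j : ℕ) : ℝ)⌋₊ := Nat.floor_le_floor h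
    _ = 2 ^ j := Nat.floor_natCast _

theorem floor_dist {T : ℝ} (hT : 0 < T) {t : ℝ} (ht : 0 ≤ t) (j : ℕ) :
    |t - (⌊t * 2 ^ j / T⌋₊ : ℝ) * T / 2 ^ j| ≤ T / 2 ^ j := by
  have h2 : (0:ℝ) < 2 ^ j := by positivity
  have hx : (0:ℝ) ≤ t * 2 ^ j / T := by positivity
  have hfl : (⌊t * 2 ^ j / T⌋₊ : ℝ) ≤ t * 2 ^ j / T := Nat.floor_le hx
  have hfu : t * 2 ^ j / T < ⌊t * 2 ^ j / T⌋₊ + 1 := Nat.lt_floor_add_one _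
  have h1 : (⌊t * 2 ^ j / T⌋₊ : ℝ) * T ≤ t * 2 ^ j := (le_div_iff₀ hT).mp hfl
  have h2' : t * 2 ^ j < ((⌊t * 2 ^ j / T⌋₊ : ℝ) + 1) * T := (div_lt_iff₀ hT).mp hfu
  have e : t - (⌊t * 2 ^ j / T⌋₊ : ℝ) * T / 2 ^ j =
      (t * 2 ^ j - (⌊t * 2 ^ j / T⌋₊ : ℝ) * T) / 2 ^ j := by field_simp; try ring
  rw [e, abs_div, abs_of_pos h2, div_le_div_iff_of_pos_right h2]
  rw [abs_le]
  constructor <;> nlinarith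

theorem dyadic_parent_dist {T : ℝ} (hT : 0 < T) (m j : ℕ) :
    |(m : ℝ) * T / 2 ^ (j + 1) - ((m / 2 : ℕ) : ℝ) * T / 2 ^ j| ≤ T / 2 ^ (j + 1) := by
  have h2 : (0:ℝ) < 2 ^ (j+1) := by positivity
  have hl : ((m / 2 : ℕ) : ℝ) * 2 ≤ (m : ℝ) := by exact_mod_cast Nat.div_mul_le_self m 2
  have hu : (m : ℝ) ≤ ((m / 2 : ℕ) : ℝ) * 2 + 1 := by
    exact_mod_cast (by omega : m ≤ m / 2 * 2 + 1)
  have e : (m : ℝ) * T / 2 ^ (j + 1) - ((m / 2 : ℕ) : ℝ) * T / 2 ^ j =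
      (((m : ℝ) - 2 * ((m / 2 : ℕ) : ℝ)) * T) / 2 ^ (j + 1) := by
    field_simp
    try ring
  rw [e, abs_div, abs_of_pos h2, div_le_div_iff_of_pos_right h2]
  rw [abs_le]
  constructor <;> nlinarith

/-- Sample-weighted absolute sums are controlled by the population mean of `|w|`. -/
theorem ht_sum_abs_le {N : ℕ} {p : Finset ℕ → ℝ} {lam : ℝ} (hlam : 0 < lam)
    (hpi : ∀ k ∈ Finset.range N, lam ≤ pi1 N p k) {s : Finset ℕ}
    (hsub : s ⊆ Finset.range N) (w : ℕ → ℝ) :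
    |(N : ℝ)⁻¹ * ∑ k ∈ s, w k / pi1 N p k| ≤
      lam⁻¹ * ((N : ℝ)⁻¹ * ∑ k ∈ Finset.range N, |w k|) := by
  have hN : (0:ℝ) ≤ (N:ℝ)⁻¹ := by positivity
  calc |(N : ℝ)⁻¹ * ∑ k ∈ s, w k / pi1 N p k|
      = (N : ℝ)⁻¹ * |∑ k ∈ s, w k / pi1 N p k| := by
        rw [abs_mul, abs_of_nonneg hN]
    _ ≤ (N : ℝ)⁻¹ * ∑ k ∈ s, |w k / pi1 N p k| :=
        mul_le_mul_of_nonneg_left (Finset.abs_sum_le_sum_abs _ _) hN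
    _ ≤ (N : ℝ)⁻¹ * ∑ k ∈ Finset.range N, lam⁻¹ * |w k| := by
        refine mul_le_mul_of_nonneg_left ?_ hN
        refine le_trans (Finset.sum_le_sum fun k hk => ?_)
          (Finset.sum_le_sum_of_subset_of_nonneg hsub fun k _ _ => by positivity)
        have hπ : lam ≤ pi1 N p k := hpi k (hsub hk)
        have hπ0 : 0 < pi1 N p k := lt_of_lt_of_le hlam hπ
        rw [abs_div, abs_of_pos hπ0, div_eq_mul_inv, mul_comm]
        exact mul_le_mul_of_nonneg_right (inv_anti₀ hlam hπ) (abs_nonneg _)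
    _ = lam⁻¹ * ((N : ℝ)⁻¹ * ∑ k ∈ Finset.range N, |w k|) := by
        rw [← Finset.mul_sum]
        ring

/-- Deterministic bound on the HT error. -/
theorem errS_abs_le {N : ℕ} {p : Finset ℕ → ℝ} {lam : ℝ} (hlam : 0 < lam)
    (hpi : ∀ k ∈ Finset.range N, lam ≤ pi1 N p k) {s : Finset ℕ}
    (hsub : s ⊆ Finset.range N) (z : ℕ → ℝ) :
    |errS N p z s| ≤ (1 + lam⁻¹) *
      Real.sqrt ((N : ℝ)⁻¹ * ∑ k ∈ Finset.range N, z k ^ 2) := by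
  have hN : (0:ℝ) ≤ (N:ℝ)⁻¹ := by positivity
  have h1 := ht_sum_abs_le hlam hpi hsub z
  have h2 : |(N : ℝ)⁻¹ * ∑ k ∈ Finset.range N, z k| ≤
      (N : ℝ)⁻¹ * ∑ k ∈ Finset.range N, |z k| := by
    rw [abs_mul, abs_of_nonneg hN]
    exact mul_le_mul_of_nonneg_left (Finset.abs_sum_le_sum_abs _ _) hN
  have h3 := avg_abs_le N z
  calc |errS N p z s| ≤ |(N : ℝ)⁻¹ * ∑ k ∈ s, z k / pi1 N p k| +
        |(N : ℝ)⁻¹ * ∑ k ∈ Finset.range N, z k| := abs_sub _ _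
    _ ≤ lam⁻¹ * ((N : ℝ)⁻¹ * ∑ k ∈ Finset.range N, |z k|) +
        (N : ℝ)⁻¹ * ∑ k ∈ Finset.range N, |z k| := add_le_add h1 h2
    _ ≤ lam⁻¹ * Real.sqrt ((N : ℝ)⁻¹ * ∑ k ∈ Finset.range N, z k ^ 2) +
        Real.sqrt ((N : ℝ)⁻¹ * ∑ k ∈ Finset.range N, z k ^ 2) :=
        add_le_add (mul_le_mul_of_nonneg_left h3 (by positivity)) h3
    _ = (1 + lam⁻¹) * Real.sqrt ((N : ℝ)⁻¹ * ∑ k ∈ Finset.range N, z k ^ 2) := by ring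

/-- Existence of a grid interval containing `t`. -/
theorem exists_interval {d : ℕ} (hd : 0 < d) {pts : Fin (d + 1) → ℝ} (hmono : Monotone pts)
    {t : ℝ} (h0 : pts 0 ≤ t) (hlast : t ≤ pts (Fin.last d)) :
    ∃ i : Fin d, pts i.castSucc ≤ t ∧ t ≤ pts i.succ := by
  classical
  set A : Finset (Fin d) := Finset.univ.filter (fun i => pts i.castSucc ≤ t) with hA
  have hzero : (⟨0, hd⟩ : Fin d) ∈ A := by
    simp only [hA, Finset.mem_filter, Finset.mem_univ, true_and]
    have : (⟨0, hd⟩ : Fin d).castSucc = 0 := by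
      ext
      simp
    rw [this]
    exact h0
  have hAne : A.Nonempty := ⟨_, hzero⟩
  set i := A.max' hAne with hi
  have himem : i ∈ A := A.max'_mem hAne
  have hile : pts i.castSucc ≤ t := by
    simpa [hA, Finset.mem_filter] using himem
  refine ⟨i, hile, ?_⟩
  by_contra hcon
  push_neg at hcon
  by_cases hlt : (i : ℕ) + 1 < d
  · have hmem2 : (⟨(i : ℕ) + 1, hlt⟩ : Fin d) ∈ A := by
      simp only [hA, Finset.mem_filter, Finset.mem_univ, true_and]
      have : (⟨(i : ℕ) + 1, hlt⟩ : Fin d).castSucc = i.succ := by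
        ext
        simp
      rw [this]
      exact le_of_lt hcon
    have := A.le_max' _ hmem2
    rw [← hi] at this
    have h2 : (i : ℕ) + 1 ≤ (i : ℕ) := this
    omega
  · have hieq : (i : ℕ) + 1 = d := by
      have := i.isLt
      omega
    have : i.succ = Fin.last d := by
      ext
      simp [hieq]
    rw [this] at hcon
    exact absurd hlast (not_le.mpr hcon)

theorem dyadic_mem {T : ℝ} (hT : 0 < T) {m j : ℕ} (hm : m ≤ 2 ^ j) :
    (m : ℝ) * T / 2 ^ j ∈ Set.Icc (0:ℝ) T := by
  have hp : (0:ℝ) < 2 ^ j := by positivity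
  constructor
  · positivity
  · rw [div_le_iff₀ hp]
    have hmr : (m : ℝ) ≤ (2:ℝ) ^ j := by exact_mod_cast hm
    nlinarith

theorem dyadic_sq {T β : ℝ} (hT : 0 < T) (j : ℕ) :
    (2:ℝ)^(j+2) * (T/2^(j+1))^(2*β) =
      (Real.sqrt 2 * T^β * ((2:ℝ)^((1-2*β)/2))^(j+1))^2 := by
  have h2 : (0:ℝ) < 2 := two_pos
  have hp : (0:ℝ) < (2:ℝ)^(j+1) := by positivity
  have e1 : ((2:ℝ)^((1-2*β)/2))^(j+1) = (2:ℝ)^(((1-2*β)/2) * (j+1 : ℕ)) := by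
    rw [← Real.rpow_natCast ((2:ℝ)^((1-2*β)/2)) (j+1), ← Real.rpow_mul h2.le]
  have e2 : ((2:ℝ)^(j+1) : ℝ)^(2*β) = (2:ℝ)^(((j+1 : ℕ) : ℝ)*(2*β)) := by
    rw [← Real.rpow_natCast (2:ℝ) (j+1), ← Real.rpow_mul h2.le]
  have e3 : (T/2^(j+1))^(2*β) = T^(2*β) * (2:ℝ)^(-(((j+1 : ℕ) : ℝ)*(2*β))) := by
    rw [Real.div_rpow hT.le hp.le, e2, div_eq_mul_inv, Real.rpow_neg h2.le]
  have e4 : (Real.sqrt 2)^2 = (2:ℝ)^(1:ℝ) := by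
    rw [Real.sq_sqrt h2.le, Real.rpow_one]
  have e5 : (T^β)^2 = T^(2*β) := by
    rw [← Real.rpow_natCast (T^β) 2, ← Real.rpow_mul hT.le]
    norm_num
    rw [mul_comm]
  have e6 : ((2:ℝ)^(((1-2*β)/2) * (j+1 : ℕ)))^2 = (2:ℝ)^((((1-2*β)/2) * (j+1 : ℕ))*2) := by
    rw [← Real.rpow_natCast ((2:ℝ)^(((1-2*β)/2) * (j+1 : ℕ))) 2, ← Real.rpow_mul h2.le]
    norm_num
  have e7 : ((2:ℝ)^(j+2) : ℝ) = (2:ℝ)^((j+2 : ℕ) : ℝ) := (Real.rpow_natCast 2 (j+2)).symm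
  rw [mul_pow, mul_pow, e4, e5, e1, e6, e3, e7]
  have hexp : ((j+2 : ℕ) : ℝ) + (-(((j+1 : ℕ) : ℝ)*(2*β))) =
      1 + ((1-2*β)/2 * ((j+1 : ℕ) : ℝ) * 2) := by
    push_cast
    ring
  calc (2:ℝ)^((j+2 : ℕ) : ℝ) * (T^(2*β) * (2:ℝ)^(-(((j+1 : ℕ) : ℝ)*(2*β))))
      = (2:ℝ)^(((j+2 : ℕ) : ℝ) + (-(((j+1 : ℕ) : ℝ)*(2*β)))) * T^(2*β) := by
        rw [Real.rpow_add h2]; ring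
    _ = (2:ℝ)^((1:ℝ) + ((1-2*β)/2 * ((j+1 : ℕ) : ℝ) * 2)) * T^(2*β) := by rw [hexp]
    _ = (2:ℝ)^(1:ℝ) * T^(2*β) * (2:ℝ)^((1-2*β)/2 * ((j+1 : ℕ) : ℝ) * 2) := by
        rw [Real.rpow_add h2]; ring

end PropAux

set_option maxHeartbeats 2000000 in
open PropAux in
/-- Proposition 1: under Assumptions 1–4, if the discretization scheme
satisfies `max_i |t_{i+1} - t_i|^{2β} = o(n⁻¹)`, then there exists a constant `C` such that
for all `N`, `√n · E[sup_{t ∈ [0,T]} |μ̂_d(t) - μ_N(t)|] < C`. -/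
theorem prop1_uniform_consistency
    (T πlim lam lamstar C₁ C₂ C₃ β : ℝ) (μ : ℝ → ℝ)
    (Y : ℕ → ℝ → ℝ) (nseq : ℕ → ℕ) (p : ℕ → Finset ℕ → ℝ)
    (hT : 0 < T)
    (hdes : ∀ N, IsDesign N (nseq N) (p N))
    -- Assumption 1
    (hA1 : Tendsto (fun N => (nseq N : ℝ) / (N : ℝ)) atTop (𝓝 πlim))
    (hπ0 : 0 < πlim) (hπ1 : πlim < 1)
    -- Assumption 2
    (hlam : 0 < lam)
    (hA2a : ∀ N, ∀ k ∈ Finset.range N, lam ≤ pi1 N (p N) k)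
    (hlamstar : 0 < lamstar)
    (hA2b : ∀ N, ∀ k ∈ Finset.range N, ∀ l ∈ Finset.range N, k ≠ l →
      lamstar ≤ pi2 N (p N) k l)
    (hC₁ : 0 < C₁)
    (hA2c : ∀ N, ∀ k ∈ Finset.range N, ∀ l ∈ Finset.range N, k ≠ l →
      (nseq N : ℝ) * |Delta N (p N) k l| ≤ C₁)
    -- Assumption 3
    (hA3a : ∀ k, ContinuousOn (Y k) (Set.Icc 0 T))
    (hA3b : ContinuousOn μ (Set.Icc 0 T))
    (hA3c : TendstoUniformlyOn (fun N t => popMean N Y t) μ atTop (Set.Icc 0 T))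
    -- Assumption 4
    (hβ : 1 / 2 < β) (hC₂ : 0 < C₂) (hC₃ : 0 < C₃)
    (hA4a : ∀ N : ℕ, (N : ℝ)⁻¹ * ∑ k ∈ Finset.range N, Y k 0 ^ 2 < C₂)
    (hA4b : ∀ N : ℕ, ∀ s ∈ Set.Icc (0 : ℝ) T, ∀ t ∈ Set.Icc (0 : ℝ) T,
      (N : ℝ)⁻¹ * ∑ k ∈ Finset.range N, (Y k t - Y k s) ^ 2 ≤ C₃ * |t - s| ^ (2 * β))
    -- discretization scheme and linear interpolation
    (dsc : ℕ → ℕ) (hdsc : ∀ N, 0 < dsc N)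
    (pts : (N : ℕ) → Fin (dsc N + 1) → ℝ)
    (hmono : ∀ N, StrictMono (pts N))
    (hpts0 : ∀ N, pts N 0 = 0) (hptsT : ∀ N, pts N (Fin.last (dsc N)) = T)
    (Ytil : ℕ → ℕ → ℝ → ℝ)
    (hinterp : ∀ N k (i : Fin (dsc N)),
      ∀ t ∈ Set.Icc (pts N i.castSucc) (pts N i.succ),
        Ytil N k t = Y k (pts N i.castSucc) +
          (Y k (pts N i.succ) - Y k (pts N i.castSucc)) /
            (pts N i.succ - pts N i.castSucc) * (t - pts N i.castSucc))
    -- the discretization scheme satisfies max_i |t_{i+1}-t_i|^{2β} = o(n⁻¹)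
    (hmesh : Tendsto (fun N => (nseq N : ℝ) * meshR (dsc N) (hdsc N) (pts N) ^ (2 * β))
      atTop (𝓝 0)) :
    ∃ C : ℝ, 0 < C ∧ ∀ N,
      Real.sqrt (nseq N) * dExp N (p N) (fun sam =>
          ⨆ t : Set.Icc (0 : ℝ) T,
            |htMean N (p N) (Ytil N) sam t - popMean N Y t|) < C := by
  classical
  haveI hne : Nonempty (Set.Icc (0:ℝ) T) := ⟨⟨0, Set.left_mem_Icc.mpr hT.le⟩⟩
  have hβ2 : (0:ℝ) ≤ 2 * β := by linarith
  have hβ0 : (0:ℝ) ≤ β := by linarith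
  set K : ℝ := lam⁻¹ + C₁ * lam⁻¹ ^ 2 with hKdef
  have hKpos : 0 < K := by positivity
  -- bound on the mesh sequence
  obtain ⟨M, hM0, hM⟩ : ∃ M : ℝ, 0 ≤ M ∧ ∀ N,
      (nseq N : ℝ) * meshR (dsc N) (hdsc N) (pts N) ^ (2*β) ≤ M := by
    obtain ⟨M₀, hM₀⟩ := hmesh.bddAbove_range
    refine ⟨max M₀ 0, le_max_right _ _, fun N => ?_⟩
    exact le_trans (hM₀ (Set.mem_range_self N)) (le_max_left _ _)
  set r : ℝ := (2:ℝ) ^ ((1 - 2*β)/2) with hrdef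
  have hr0 : 0 < r := Real.rpow_pos_of_pos two_pos _
  have hr1 : r < 1 := Real.rpow_lt_one_of_one_lt_of_neg one_lt_two (by linarith)
  have h1r : 0 < 1 - r := by linarith
  set Tb : ℝ := T ^ β with hTbdef
  have hTb : 0 < Tb := Real.rpow_pos_of_pos hT β
  set C₀ : ℝ := 2*lam⁻¹*Real.sqrt C₃*Real.sqrt M + (1+lam⁻¹)*Real.sqrt C₃*Tb
      + (Real.sqrt (K*C₂) + Real.sqrt (K*(2*C₂+2*C₃*T^(2*β))))
      + Real.sqrt (K*C₃)*Real.sqrt 2*Tb*(1-r)⁻¹ with hC₀def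
  have hC₀ : 0 ≤ C₀ := by
    have h1 : (0:ℝ) ≤ 2*lam⁻¹*Real.sqrt C₃*Real.sqrt M := by positivity
    have h2 : (0:ℝ) ≤ (1+lam⁻¹)*Real.sqrt C₃*Tb := by positivity
    have h3 : (0:ℝ) ≤ Real.sqrt (K*C₂) + Real.sqrt (K*(2*C₂+2*C₃*T^(2*β))) := by positivity
    have h4 : (0:ℝ) ≤ Real.sqrt (K*C₃)*Real.sqrt 2*Tb*(1-r)⁻¹ := by positivity
    rw [hC₀def]
    linarith
  refine ⟨C₀ + 1, by linarith, fun N => ?_⟩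
  rcases Nat.eq_zero_or_pos N with hN0 | hNpos
  · -- trivial case N = 0
    subst hN0
    have hz : dExp 0 (p 0) (fun sam => ⨆ t : Set.Icc (0:ℝ) T,
        |htMean 0 (p 0) (Ytil 0) sam t - popMean 0 Y t|) = 0 := by
      simp [dExp, htMean, popMean, ciSup_const]
    rw [hz, mul_zero]
    linarith
  -- main case
  have hdesN := hdes N
  have hn1 : 1 ≤ nseq N := by
    by_contra hcon
    push_neg at hcon
    have hn0 : nseq N = 0 := by omega
    have h0N : 0 ∈ Finset.range N := Finset.mem_range.mpr hNpos
    have hpi10 : pi1 N (p N) 0 = 0 := by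
      unfold pi1 dExp
      refine Finset.sum_eq_zero fun s _ => ?_
      rcases eq_or_ne (p N s) 0 with h0 | h0
      · simp [h0]
      · have hc := (hdesN.supp s h0).2
        rw [hn0] at hc
        have : s = ∅ := Finset.card_eq_zero.mp hc
        simp [this]
    have := hA2a N 0 h0N
    rw [hpi10] at this
    linarith
  have hnR : (0:ℝ) < (nseq N : ℝ) := by exact_mod_cast hn1
  set n : ℕ := nseq N with hndef
  set mesh : ℝ := meshR (dsc N) (hdsc N) (pts N) with hmeshdef
  have hmesh0 : 0 ≤ mesh := by
    rw [hmeshdef]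
    unfold meshR
    exact le_trans (abs_nonneg _)
      (Finset.le_sup' (fun i : Fin (dsc N) => |pts N i.succ - pts N i.castSucc|)
        (Finset.mem_univ (⟨0, hdsc N⟩ : Fin (dsc N))))
  -- dyadic grid machinery
  set q : ℕ → ℕ → ℝ := fun j m => (m:ℝ) * T / 2^j with hqdef
  set Dd : ℕ → ℕ → Finset ℕ → ℝ := fun j m sam =>
    errS N (p N) (fun k => Y k (q (j+1) m) - Y k (q j (m/2))) sam with hDdef
  set G : ℕ → Finset ℕ → ℝ := fun j sam =>
    Real.sqrt (∑ m ∈ Finset.range (2^(j+1)+1), (Dd j m sam)^2) with hGdef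
  set c1 : ℝ := 2*lam⁻¹*Real.sqrt C₃*(mesh ^ β) with hc1def
  set c2 : ℝ := (1+lam⁻¹)*Real.sqrt C₃*((T/2^n) ^ β) with hc2def
  -- Hölder-type bound on population L² distances
  have hsr : ∀ u ∈ Set.Icc (0:ℝ) T, ∀ v ∈ Set.Icc (0:ℝ) T, ∀ δ : ℝ, 0 ≤ δ → |u - v| ≤ δ →
      Real.sqrt ((N:ℝ)⁻¹ * ∑ k ∈ Finset.range N, (Y k u - Y k v)^2) ≤
        Real.sqrt C₃ * δ ^ β := by
    intro u hu v hv δ hδ huv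
    have h1 : (N:ℝ)⁻¹ * ∑ k ∈ Finset.range N, (Y k u - Y k v)^2 ≤ C₃ * δ ^ (2*β) := by
      refine le_trans (hA4b N v hv u hu) ?_
      exact mul_le_mul_of_nonneg_left
        (Real.rpow_le_rpow (abs_nonneg _) huv hβ2) hC₃.le
    refine le_trans (Real.sqrt_le_sqrt h1) ?_
    rw [Real.sqrt_mul hC₃.le, sqrt_rpow_two hδ]
  -- pathwise bound
  have hpath : ∀ sam, p N sam ≠ 0 → ∀ t : Set.Icc (0:ℝ) T,
      |htMean N (p N) (Ytil N) sam t - popMean N Y t| ≤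
        (c1 + c2) + ((|errS N (p N) (fun k => Y k 0) sam| +
          |errS N (p N) (fun k => Y k T) sam|) + ∑ j ∈ Finset.range n, G j sam) := by
    intro sam hsam t
    obtain ⟨hsub, hcard⟩ := hdesN.supp sam hsam
    obtain ⟨tv, ht0, htT⟩ := t
    show |htMean N (p N) (Ytil N) sam tv - popMean N Y tv| ≤ _
    have htvmem : tv ∈ Set.Icc (0:ℝ) T := ⟨ht0, htT⟩
    -- locate tv in the discretization grid
    obtain ⟨i, hi1, hi2⟩ := exists_interval (hdsc N) (hmono N).monotone
      (show pts N 0 ≤ tv from by rw [hpts0 N]; exact ht0)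
      (show tv ≤ pts N (Fin.last (dsc N)) from by rw [hptsT N]; exact htT)
    set t1 := pts N i.castSucc with ht1def
    set t2 := pts N i.succ with ht2def
    have ht12 : t1 < t2 := hmono N (Fin.castSucc_lt_succ (i := i))
    have hgap : t2 - t1 ≤ mesh := by
      rw [hmeshdef]
      unfold meshR
      have hle := Finset.le_sup'
        (fun i : Fin (dsc N) => |pts N i.succ - pts N i.castSucc|) (Finset.mem_univ i)
      rw [← ht1def, ← ht2def, abs_of_pos (sub_pos.mpr ht12)] at hle
      exact hle
    have h0t1 : (0:ℝ) ≤ t1 := by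
      rw [ht1def, ← hpts0 N]
      exact (hmono N).monotone (Fin.zero_le _)
    have ht2T : t2 ≤ T := by
      rw [ht2def, ← hptsT N]
      exact (hmono N).monotone (Fin.le_last _)
    have ht1mem : t1 ∈ Set.Icc (0:ℝ) T := ⟨h0t1, by linarith⟩
    have ht2mem : t2 ∈ Set.Icc (0:ℝ) T := ⟨by linarith, ht2T⟩
    -- convexity representation of the interpolation
    set θ := (tv - t1)/(t2 - t1) with hθdef
    have hθ0 : 0 ≤ θ := div_nonneg (by linarith) (by linarith)
    have hθ1 : θ ≤ 1 := (div_le_one (by linarith)).mpr (by linarith)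
    have hYtil : ∀ k, Ytil N k tv - Y k tv =
        (1-θ)*(Y k t1 - Y k tv) + θ*(Y k t2 - Y k tv) := by
      intro k
      rw [hinterp N k i tv ⟨hi1, hi2⟩, ← ht1def, ← ht2def, hθdef]
      have hne : t2 - t1 ≠ 0 := by linarith
      field_simp
      ring
    -- part 1 : interpolation error
    have hpart1 : |htMean N (p N) (Ytil N) sam tv - htMean N (p N) Y sam tv| ≤ c1 := by
      have heq : htMean N (p N) (Ytil N) sam tv - htMean N (p N) Y sam tv =
          (N:ℝ)⁻¹ * ∑ k ∈ sam, (Ytil N k tv - Y k tv)/pi1 N (p N) k := by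
        unfold htMean
        rw [← mul_sub, ← Finset.sum_sub_distrib]
        congr 1
        exact Finset.sum_congr rfl fun k _ => (sub_div _ _ _).symm
      rw [heq]
      refine le_trans (ht_sum_abs_le hlam (hA2a N) hsub _) ?_
      have hb1 : Real.sqrt ((N:ℝ)⁻¹ * ∑ k ∈ Finset.range N, (Y k t1 - Y k tv)^2) ≤
          Real.sqrt C₃ * mesh^β := by
        refine hsr t1 ht1mem tv htvmem mesh hmesh0 ?_
        rw [abs_sub_comm, abs_of_nonneg (by linarith : (0:ℝ) ≤ tv - t1)]
        linarith
      have hb2 : Real.sqrt ((N:ℝ)⁻¹ * ∑ k ∈ Finset.range N, (Y k t2 - Y k tv)^2) ≤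
          Real.sqrt C₃ * mesh^β := by
        refine hsr t2 ht2mem tv htvmem mesh hmesh0 ?_
        rw [abs_of_nonneg (by linarith : (0:ℝ) ≤ t2 - tv)]
        linarith
      have havg : (N:ℝ)⁻¹ * ∑ k ∈ Finset.range N, |Ytil N k tv - Y k tv| ≤
          2*(Real.sqrt C₃ * mesh^β) := by
        calc (N:ℝ)⁻¹ * ∑ k ∈ Finset.range N, |Ytil N k tv - Y k tv|
            ≤ (N:ℝ)⁻¹ * ∑ k ∈ Finset.range N,
                (|Y k t1 - Y k tv| + |Y k t2 - Y k tv|) := by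
              refine mul_le_mul_of_nonneg_left (Finset.sum_le_sum fun k _ => ?_)
                (by positivity)
              rw [hYtil k]
              calc |(1-θ)*(Y k t1 - Y k tv) + θ*(Y k t2 - Y k tv)|
                  ≤ |(1-θ)*(Y k t1 - Y k tv)| + |θ*(Y k t2 - Y k tv)| := abs_add_le _ _
                _ = (1-θ)*|Y k t1 - Y k tv| + θ*|Y k t2 - Y k tv| := by
                    rw [abs_mul, abs_mul, abs_of_nonneg (by linarith : (0:ℝ) ≤ 1-θ),
                      abs_of_nonneg hθ0]
                _ ≤ |Y k t1 - Y k tv| + |Y k t2 - Y k tv| := by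
                    nlinarith [abs_nonneg (Y k t1 - Y k tv), abs_nonneg (Y k t2 - Y k tv)]
          _ = (N:ℝ)⁻¹ * ∑ k ∈ Finset.range N, |Y k t1 - Y k tv| +
              (N:ℝ)⁻¹ * ∑ k ∈ Finset.range N, |Y k t2 - Y k tv| := by
              rw [Finset.sum_add_distrib, mul_add]
          _ ≤ Real.sqrt ((N:ℝ)⁻¹ * ∑ k ∈ Finset.range N, (Y k t1 - Y k tv)^2) +
              Real.sqrt ((N:ℝ)⁻¹ * ∑ k ∈ Finset.range N, (Y k t2 - Y k tv)^2) :=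
              add_le_add (avg_abs_le N _) (avg_abs_le N _)
          _ ≤ Real.sqrt C₃ * mesh^β + Real.sqrt C₃ * mesh^β := add_le_add hb1 hb2
          _ = 2*(Real.sqrt C₃ * mesh^β) := by ring
      calc lam⁻¹ * ((N:ℝ)⁻¹ * ∑ k ∈ Finset.range N, |Ytil N k tv - Y k tv|)
          ≤ lam⁻¹ * (2*(Real.sqrt C₃ * mesh^β)) :=
            mul_le_mul_of_nonneg_left havg (by positivity)
        _ = c1 := by rw [hc1def]; ring
    -- part 2 : dyadic chaining of the HT error of Y
    have herr2 : htMean N (p N) Y sam tv - popMean N Y tv =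
        errS N (p N) (fun k => Y k tv) sam := rfl
    set mj : ℕ → ℕ := fun j => ⌊tv * 2^j / T⌋₊ with hmjdef
    set u : ℕ → ℝ := fun j => (mj j : ℝ) * T / 2^j with hudef
    set F : ℕ → ℝ := fun j => errS N (p N) (fun k => Y k (u j)) sam with hFdef
    have humem : ∀ j, u j ∈ Set.Icc (0:ℝ) T := by
      intro j
      simp only [hudef, hmjdef]
      exact dyadic_mem hT (floor_le_pow hT htT j)
    have htail : |errS N (p N) (fun k => Y k tv) sam - F n| ≤ c2 := by
      rw [show errS N (p N) (fun k => Y k tv) sam - F n =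
          errS N (p N) (fun k => Y k tv - Y k (u n)) sam from by
        simp only [hFdef]
        rw [errS_sub]]
      refine le_trans (errS_abs_le hlam (hA2a N) hsub _) ?_
      have hd : |tv - u n| ≤ T/2^n := by
        simp only [hudef, hmjdef]
        exact floor_dist hT ht0 n
      refine le_trans (mul_le_mul_of_nonneg_left
        (hsr tv htvmem (u n) (humem n) (T/2^n) (by positivity) hd) (by positivity)) ?_
      rw [hc2def]
      ring_nf
      exact le_refl _
    have hstep : ∀ j ∈ Finset.range n, |F (j+1) - F j| ≤ G j sam := by
      intro j hj
      have hfl : mj j = mj (j+1) / 2 := by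
        simp only [hmjdef]
        exact floor_parent hT tv j
      have heq : F (j+1) - F j = Dd j (mj (j+1)) sam := by
        simp only [hFdef, hDdef, hqdef, hudef]
        rw [← errS_sub]
        rw [hfl]
      rw [heq]
      have hm : mj (j+1) ∈ Finset.range (2^(j+1)+1) := by
        refine Finset.mem_range.mpr (Nat.lt_succ_of_le ?_)
        simp only [hmjdef]
        exact floor_le_pow hT htT (j+1)
      have hGj : G j sam = Real.sqrt (∑ m ∈ Finset.range (2^(j+1)+1), (Dd j m sam)^2) := by
        simp only [hGdef]
      rw [hGj, ← Real.sqrt_sq_eq_abs]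
      exact Real.sqrt_le_sqrt (Finset.single_le_sum (fun m _ => sq_nonneg (Dd j m sam)) hm)
    have hF0 : |F 0| ≤ |errS N (p N) (fun k => Y k 0) sam| +
        |errS N (p N) (fun k => Y k T) sam| := by
      have hm0 : mj 0 ≤ 1 := by
        have h := floor_le_pow hT htT 0
        simpa [hmjdef] using h
      rcases Nat.le_one_iff_eq_zero_or_eq_one.mp hm0 with h | h
      · have hu0 : u 0 = 0 := by
          simp [hudef, h]
        have hF0eq : F 0 = errS N (p N) (fun k => Y k 0) sam := by
          simp only [hFdef]
          rw [hu0]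
        rw [hF0eq]
        exact le_add_of_nonneg_right (abs_nonneg _)
      · have hu0 : u 0 = T := by
          simp [hudef, h]
        have hF0eq : F 0 = errS N (p N) (fun k => Y k T) sam := by
          simp only [hFdef]
          rw [hu0]
        rw [hF0eq]
        exact le_add_of_nonneg_left (abs_nonneg _)
    have hchain : |errS N (p N) (fun k => Y k tv) sam| ≤
        c2 + ((|errS N (p N) (fun k => Y k 0) sam| +
          |errS N (p N) (fun k => Y k T) sam|) + ∑ j ∈ Finset.range n, G j sam) := by
      have htel : F n = F 0 + ∑ j ∈ Finset.range n, (F (j+1) - F j) := by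
        rw [Finset.sum_range_sub F n]
        ring
      have hFn : |F n| ≤ |F 0| + ∑ j ∈ Finset.range n, G j sam := by
        rw [htel]
        refine le_trans (abs_add_le _ _) (add_le_add_right ?_ _)
        exact le_trans (Finset.abs_sum_le_sum_abs _ _) (Finset.sum_le_sum hstep)
      have habs : |errS N (p N) (fun k => Y k tv) sam| ≤
          |errS N (p N) (fun k => Y k tv) sam - F n| + |F n| := by
        calc |errS N (p N) (fun k => Y k tv) sam|
            = |(errS N (p N) (fun k => Y k tv) sam - F n) + F n| := by ring_nf
          _ ≤ |errS N (p N) (fun k => Y k tv) sam - F n| + |F n| := abs_add_le _ _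
      have habs2 := le_trans habs (add_le_add htail hFn)
      linarith
    -- total
    have hsplit : htMean N (p N) (Ytil N) sam tv - popMean N Y tv =
        (htMean N (p N) (Ytil N) sam tv - htMean N (p N) Y sam tv) +
          errS N (p N) (fun k => Y k tv) sam := by
      rw [← herr2]
      ring
    calc |htMean N (p N) (Ytil N) sam tv - popMean N Y tv|
        ≤ |htMean N (p N) (Ytil N) sam tv - htMean N (p N) Y sam tv| +
          |errS N (p N) (fun k => Y k tv) sam| := by
          rw [hsplit]
          exact abs_add_le _ _
      _ ≤ c1 + (c2 + ((|errS N (p N) (fun k => Y k 0) sam| +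
            |errS N (p N) (fun k => Y k T) sam|) + ∑ j ∈ Finset.range n, G j sam)) :=
          add_le_add hpart1 hchain
      _ = (c1 + c2) + ((|errS N (p N) (fun k => Y k 0) sam| +
            |errS N (p N) (fun k => Y k T) sam|) + ∑ j ∈ Finset.range n, G j sam) := by
          ring
  -- expectation bounds
  have hEabs : ∀ z : ℕ → ℝ, dExp N (p N) (fun sam => |errS N (p N) z sam|) ≤
      Real.sqrt (K / n * ((N:ℝ)⁻¹ * ∑ k ∈ Finset.range N, z k ^ 2)) := by
    intro z
    have h1 : dExp N (p N) (fun sam => |errS N (p N) z sam|) =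
        dExp N (p N) (fun sam => |errI N (p N) z sam|) :=
      dExp_congr fun s hs => by rw [errI_eq_errS (hdesN.supp s hs).1]
    rw [h1]
    refine le_trans (dExp_abs_le_sqrt hdesN _) (Real.sqrt_le_sqrt ?_)
    exact var_bound hdesN hn1 hlam hC₁.le (hA2a N)
      (fun k hk l hl hkl => hA2c N k hk l hl hkl) z
  have hEsq : ∀ z : ℕ → ℝ, dExp N (p N) (fun sam => (errS N (p N) z sam)^2) ≤
      K / n * ((N:ℝ)⁻¹ * ∑ k ∈ Finset.range N, z k ^ 2) := by
    intro z
    have h1 : dExp N (p N) (fun sam => (errS N (p N) z sam)^2) =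
        dExp N (p N) (fun sam => (errI N (p N) z sam)^2) :=
      dExp_congr fun s hs => by rw [errI_eq_errS (hdesN.supp s hs).1]
    rw [h1]
    exact var_bound hdesN hn1 hlam hC₁.le (hA2a N)
      (fun k hk l hl hkl => hA2c N k hk l hl hkl) z
  -- level bound
  have hEG : ∀ j : ℕ, dExp N (p N) (G j) ≤
      Real.sqrt (K * C₃ / n * (2^(j+2) * (T/2^(j+1))^(2*β))) := by
    intro j
    have hDb : ∀ m ∈ Finset.range (2^(j+1)+1),
        dExp N (p N) (fun sam => (Dd j m sam)^2) ≤ K/n * (C₃ * (T/2^(j+1))^(2*β)) := by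
      intro m hm
      have hmle : m ≤ 2^(j+1) := Nat.lt_succ_iff.mp (Finset.mem_range.mp hm)
      have hm2 : m/2 ≤ 2^j := by
        have h := pow_succ 2 j
        omega
      simp only [hDdef]
      refine le_trans (hEsq _) ?_
      refine mul_le_mul_of_nonneg_left ?_ (by positivity)
      have hq1 : q (j+1) m ∈ Set.Icc (0:ℝ) T := by
        simp only [hqdef]
        exact dyadic_mem hT hmle
      have hq2 : q j (m/2) ∈ Set.Icc (0:ℝ) T := by
        simp only [hqdef]
        exact dyadic_mem hT hm2
      refine le_trans (hA4b N (q j (m/2)) hq2 (q (j+1) m) hq1) ?_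
      refine mul_le_mul_of_nonneg_left (Real.rpow_le_rpow (abs_nonneg _) ?_ hβ2) hC₃.le
      simp only [hqdef]
      exact dyadic_parent_dist hT m j
    have h1 : dExp N (p N) (G j) ≤
        Real.sqrt (dExp N (p N) (fun sam => ∑ m ∈ Finset.range (2^(j+1)+1), (Dd j m sam)^2)) := by
      simp only [hGdef]
      exact dExp_sqrt_le_sqrt hdesN _ (fun s _ => Finset.sum_nonneg fun m _ => sq_nonneg _)
    refine le_trans h1 (Real.sqrt_le_sqrt ?_)
    rw [dExp_sum]
    refine le_trans (Finset.sum_le_sum hDb) ?_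
    rw [Finset.sum_const, Finset.card_range, nsmul_eq_mul]
    have hcard : ((2^(j+1)+1 : ℕ) : ℝ) ≤ (2:ℝ)^(j+2) := by
      have h1 : (1:ℝ) ≤ (2:ℝ)^(j+1) := by exact_mod_cast Nat.one_le_two_pow
      have e1 : (2:ℝ)^(j+1) = 2^j*2 := pow_succ 2 j
      have e2 : (2:ℝ)^(j+2) = 2^j*2*2 := by rw [pow_succ, pow_succ]
      push_cast
      linarith
    have ha : (0:ℝ) ≤ K/n * (C₃ * (T/2^(j+1))^(2*β)) := by positivity
    calc ((2^(j+1)+1 : ℕ) : ℝ) * (K/n * (C₃ * (T/2^(j+1))^(2*β)))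
        ≤ (2:ℝ)^(j+2) * (K/n * (C₃ * (T/2^(j+1))^(2*β))) :=
          mul_le_mul_of_nonneg_right hcard ha
      _ = K * C₃ / n * (2^(j+2) * (T/2^(j+1))^(2*β)) := by ring
  -- per-level clean bound
  have hEG2 : ∀ j : ℕ, Real.sqrt (n:ℝ) * dExp N (p N) (G j) ≤
      Real.sqrt (K*C₃) * (Real.sqrt 2 * Tb * r^(j+1)) := by
    intro j
    have hGnn : 0 ≤ dExp N (p N) (G j) :=
      dExp_nonneg hdesN.nonneg fun s _ => by
        simp only [hGdef]
        exact Real.sqrt_nonneg _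
    calc Real.sqrt (n:ℝ) * dExp N (p N) (G j)
        ≤ Real.sqrt (n:ℝ) * Real.sqrt (K * C₃ / n * (2^(j+2) * (T/2^(j+1))^(2*β))) :=
          mul_le_mul_of_nonneg_left (hEG j) (Real.sqrt_nonneg _)
      _ = Real.sqrt ((n:ℝ) * (K * C₃ / n * (2^(j+2) * (T/2^(j+1))^(2*β)))) :=
          (Real.sqrt_mul (by positivity) _).symm
      _ = Real.sqrt ((K * C₃) * (2^(j+2) * (T/2^(j+1))^(2*β))) := by
          congr 1
          field_simp
      _ = Real.sqrt (K*C₃) * Real.sqrt (2^(j+2) * (T/2^(j+1))^(2*β)) :=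
          Real.sqrt_mul (by positivity) _
      _ = Real.sqrt (K*C₃) * (Real.sqrt 2 * Tb * r^(j+1)) := by
          congr 1
          rw [dyadic_sq hT j, Real.sqrt_sq (by positivity), hTbdef, hrdef]
  -- final assembly
  set E0 : ℝ := dExp N (p N) (fun sam => |errS N (p N) (fun k => Y k 0) sam|) with hE0def
  set ET : ℝ := dExp N (p N) (fun sam => |errS N (p N) (fun k => Y k T) sam|) with hETdef
  set S : ℝ := ∑ j ∈ Finset.range n, dExp N (p N) (G j) with hSdef
  have hsupB : dExp N (p N) (fun sam => ⨆ t : Set.Icc (0 : ℝ) T,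
      |htMean N (p N) (Ytil N) sam t - popMean N Y t|) ≤
      (c1 + c2) + ((E0 + ET) + S) := by
    refine le_trans (dExp_mono hdesN.nonneg fun sam hs => ciSup_le (hpath sam hs)) (le_of_eq ?_)
    rw [dExp_add, dExp_const hdesN, dExp_add, dExp_add, dExp_sum]
  have hsupnn : 0 ≤ dExp N (p N) (fun sam => ⨆ t : Set.Icc (0 : ℝ) T,
      |htMean N (p N) (Ytil N) sam t - popMean N Y t|) := by
    refine dExp_nonneg hdesN.nonneg fun s hs => ?_
    refine le_ciSup_of_le ?_ ⟨0, Set.left_mem_Icc.mpr hT.le⟩ (abs_nonneg _)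
    refine ⟨(c1 + c2) + ((|errS N (p N) (fun k => Y k 0) s| +
      |errS N (p N) (fun k => Y k T) s|) + ∑ j ∈ Finset.range n, G j s), ?_⟩
    rintro x ⟨t, rfl⟩
    exact hpath s hs t
  -- individual bounds
  have b1 : Real.sqrt (n:ℝ) * c1 ≤ 2*lam⁻¹*Real.sqrt C₃*Real.sqrt M := by
    have hnm : Real.sqrt (n:ℝ) * mesh^β ≤ Real.sqrt M := by
      rw [← sqrt_rpow_two hmesh0, ← Real.sqrt_mul (by positivity : (0:ℝ) ≤ (n:ℝ))]
      refine Real.sqrt_le_sqrt ?_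
      rw [hndef, hmeshdef]
      exact hM N
    calc Real.sqrt (n:ℝ) * c1 = 2*lam⁻¹*Real.sqrt C₃*(Real.sqrt (n:ℝ) * mesh^β) := by
          rw [hc1def]; ring
      _ ≤ 2*lam⁻¹*Real.sqrt C₃*Real.sqrt M :=
          mul_le_mul_of_nonneg_left hnm (by positivity)
  have b2 : Real.sqrt (n:ℝ) * c2 ≤ (1+lam⁻¹)*Real.sqrt C₃*Tb := by
    have hp2 : (0:ℝ) < (2:ℝ)^n := by positivity
    have hsn : Real.sqrt (n:ℝ) * ((T/2^n) ^ β) ≤ Tb := by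
      have h1 : ((n:ℕ):ℝ) ≤ (2:ℝ)^n := by
        exact_mod_cast (Nat.lt_two_pow_self (n := n)).le
      have h2 : Real.sqrt (n:ℝ) ≤ ((2:ℝ)^n)^β := by
        calc Real.sqrt (n:ℝ) ≤ Real.sqrt ((2:ℝ)^n) := Real.sqrt_le_sqrt h1
          _ = ((2:ℝ)^n)^((1:ℝ)/2) := Real.rpow_natCast (2:ℝ) n ▸ Real.sqrt_eq_rpow _
          _ ≤ ((2:ℝ)^n)^β := Real.rpow_le_rpow_of_exponent_le
              (by exact_mod_cast Nat.one_le_two_pow) (by linarith)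
      have h3 : (T/2^n) ^ β = Tb / ((2:ℝ)^n)^β := by
        rw [hTbdef, Real.div_rpow hT.le hp2.le]
      rw [h3]
      rw [div_eq_mul_inv, ← mul_assoc, mul_comm (Real.sqrt (n:ℝ)) Tb, mul_assoc]
      have h4 : Real.sqrt (n:ℝ) * (((2:ℝ)^n)^β)⁻¹ ≤ 1 := by
        rw [← div_eq_mul_inv, div_le_one (Real.rpow_pos_of_pos hp2 β)]
        exact h2
      calc Tb * (Real.sqrt (n:ℝ) * (((2:ℝ)^n)^β)⁻¹) ≤ Tb * 1 :=
            mul_le_mul_of_nonneg_left h4 hTb.le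
        _ = Tb := mul_one _
    calc Real.sqrt (n:ℝ) * c2 = (1+lam⁻¹)*Real.sqrt C₃*(Real.sqrt (n:ℝ) * ((T/2^n) ^ β)) := by
          rw [hc2def]; ring
      _ ≤ (1+lam⁻¹)*Real.sqrt C₃*Tb := mul_le_mul_of_nonneg_left hsn (by positivity)
  have bE : ∀ z : ℕ → ℝ, ∀ A : ℝ, 0 ≤ A →
      ((N:ℝ)⁻¹ * ∑ k ∈ Finset.range N, z k ^ 2) ≤ A →
      Real.sqrt (n:ℝ) * dExp N (p N) (fun sam => |errS N (p N) z sam|) ≤ Real.sqrt (K * A) := by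
    intro z A hA hzA
    have h1 : dExp N (p N) (fun sam => |errS N (p N) z sam|) ≤ Real.sqrt (K / n * A) := by
      refine le_trans (hEabs z) (Real.sqrt_le_sqrt ?_)
      exact mul_le_mul_of_nonneg_left hzA (by positivity)
    have hEnn : 0 ≤ dExp N (p N) (fun sam => |errS N (p N) z sam|) :=
      dExp_nonneg hdesN.nonneg fun s _ => abs_nonneg _
    calc Real.sqrt (n:ℝ) * dExp N (p N) (fun sam => |errS N (p N) z sam|)
        ≤ Real.sqrt (n:ℝ) * Real.sqrt (K / n * A) :=
          mul_le_mul_of_nonneg_left h1 (Real.sqrt_nonneg _)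
      _ = Real.sqrt ((n:ℝ) * (K / n * A)) := (Real.sqrt_mul (by positivity) _).symm
      _ = Real.sqrt (K * A) := by
          congr 1
          field_simp
  have b3 : Real.sqrt (n:ℝ) * E0 ≤ Real.sqrt (K * C₂) := by
    rw [hE0def]
    exact bE _ _ hC₂.le (hA4a N).le
  have b4 : Real.sqrt (n:ℝ) * ET ≤ Real.sqrt (K * (2*C₂+2*C₃*T^(2*β))) := by
    rw [hETdef]
    refine bE (fun k => Y k T) (2*C₂+2*C₃*T^(2*β)) (by positivity) ?_
    have hstep : ∀ k ∈ Finset.range N, (Y k T)^2 ≤ 2*(Y k 0)^2 + 2*(Y k T - Y k 0)^2 :=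
      fun k _ => by nlinarith [sq_nonneg (Y k T - 2*Y k 0)]
    have hTmem : T ∈ Set.Icc (0:ℝ) T := Set.right_mem_Icc.mpr hT.le
    have h0mem : (0:ℝ) ∈ Set.Icc (0:ℝ) T := Set.left_mem_Icc.mpr hT.le
    calc (N:ℝ)⁻¹ * ∑ k ∈ Finset.range N, (Y k T)^2
        ≤ (N:ℝ)⁻¹ * ∑ k ∈ Finset.range N, (2*(Y k 0)^2 + 2*(Y k T - Y k 0)^2) :=
          mul_le_mul_of_nonneg_left (Finset.sum_le_sum hstep) (by positivity)
      _ = 2*((N:ℝ)⁻¹ * ∑ k ∈ Finset.range N, (Y k 0)^2) +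
          2*((N:ℝ)⁻¹ * ∑ k ∈ Finset.range N, (Y k T - Y k 0)^2) := by
          rw [Finset.sum_add_distrib]
          rw [show ∑ k ∈ Finset.range N, 2*(Y k 0)^2 = 2 * ∑ k ∈ Finset.range N, (Y k 0)^2 from
            (Finset.mul_sum _ _ _).symm]
          rw [show ∑ k ∈ Finset.range N, 2*(Y k T - Y k 0)^2 =
            2 * ∑ k ∈ Finset.range N, (Y k T - Y k 0)^2 from (Finset.mul_sum _ _ _).symm]
          ring
      _ ≤ 2*C₂ + 2*(C₃*|T - 0|^(2*β)) := by
          have h1 := (hA4a N).le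
          have h2 := hA4b N 0 h0mem T hTmem
          nlinarith
      _ = 2*C₂+2*C₃*T^(2*β) := by
          rw [sub_zero, abs_of_pos hT]
          ring
  have b5 : Real.sqrt (n:ℝ) * S ≤ Real.sqrt (K*C₃) * Real.sqrt 2 * Tb * (1-r)⁻¹ := by
    rw [hSdef, Finset.mul_sum]
    refine le_trans (Finset.sum_le_sum fun j _ => hEG2 j) ?_
    rw [← Finset.mul_sum]
    have hgeom : ∑ j ∈ Finset.range n, (Real.sqrt 2 * Tb * r^(j+1)) ≤
        Real.sqrt 2 * Tb * (1-r)⁻¹ := by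
      rw [show ∑ j ∈ Finset.range n, (Real.sqrt 2 * Tb * r^(j+1)) =
          Real.sqrt 2 * Tb * ∑ j ∈ Finset.range n, r^(j+1) from by
        rw [Finset.mul_sum]]
      refine mul_le_mul_of_nonneg_left ?_ (by positivity)
      calc ∑ j ∈ Finset.range n, r^(j+1) = r * ∑ j ∈ Finset.range n, r^j := by
            rw [Finset.mul_sum]
            exact Finset.sum_congr rfl fun j _ => by ring
        _ ≤ r * (1-r)⁻¹ := mul_le_mul_of_nonneg_left (geom_le hr0.le hr1 n) hr0.le
        _ ≤ 1 * (1-r)⁻¹ := mul_le_mul_of_nonneg_right hr1.le (by positivity)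
        _ = (1-r)⁻¹ := one_mul _
    calc Real.sqrt (K*C₃) * ∑ j ∈ Finset.range n, (Real.sqrt 2 * Tb * r^(j+1))
        ≤ Real.sqrt (K*C₃) * (Real.sqrt 2 * Tb * (1-r)⁻¹) :=
          mul_le_mul_of_nonneg_left hgeom (by positivity)
      _ = Real.sqrt (K*C₃) * Real.sqrt 2 * Tb * (1-r)⁻¹ := by ring
  -- conclude
  have hfinal : Real.sqrt (n:ℝ) * dExp N (p N) (fun sam => ⨆ t : Set.Icc (0 : ℝ) T,
      |htMean N (p N) (Ytil N) sam t - popMean N Y t|) ≤ C₀ := by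
    have hexp : Real.sqrt (n:ℝ) * ((c1 + c2) + ((E0 + ET) + S)) =
        Real.sqrt (n:ℝ)*c1 + Real.sqrt (n:ℝ)*c2 +
          (Real.sqrt (n:ℝ)*E0 + Real.sqrt (n:ℝ)*ET) + Real.sqrt (n:ℝ)*S := by ring
    have h := mul_le_mul_of_nonneg_left hsupB (Real.sqrt_nonneg (n:ℝ))
    rw [hexp] at h
    rw [hC₀def]
    linarith
  linarith

end
end
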